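/- arXiv:0910.1939 — 6 statements merged into one kernel-verified Lean document; each statement's English description precedes it below -/
import Mathlib

section
/- Every non-circular standard weighted graph Gamma is birationally equivalent to a standard weighted graph Gamma' with the same underlying graph and the same weight sequences on all linear segments, such that for every connected component G of Gamma_0: if G contains an end-vertex of Gamma, then every branching point in G has weight 0 in Gamma'; otherwise every branching point in G has weight 0 in Gamma' with one exception, whose weight in Gamma' equals the sum of the Gamma-weights of the branching points lying in G. -/
/-- A weighted graph: a finite simple graph on a finite set of natural-number
vertices, with an integer weight attached to each vertex. -/
structure WGraph where
  verts : Finset ℕ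
  adj : ℕ → ℕ → Bool
  symm : ∀ u v, adj u v = true → adj v u = true
  loopless : ∀ v, adj v v = false
  support : ∀ u v, adj u v = true → u ∈ verts ∧ v ∈ verts
  wt : ℕ → ℤ

namespace WGraph

/-- The degree of a vertex. -/
def deg (G : WGraph) (v : ℕ) : ℕ := (G.verts.filter (fun u => G.adj v u = true)).card

/-- A branching point: a vertex of degree at least `3`. -/
def Branch (G : WGraph) (v : ℕ) : Prop := v ∈ G.verts ∧ 3 ≤ G.deg v

/-- The graph is connected (and nonempty). -/
def Connected (G : WGraph) : Prop :=
  G.verts.Nonempty ∧ ∀ u ∈ G.verts, ∀ v ∈ G.verts,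
    Relation.ReflTransGen (fun a b => G.adj a b = true) u v

/-- A circular graph: a nonempty connected graph all of whose vertices have degree `2`,
i.e. a cycle. -/
def IsCircular (G : WGraph) : Prop :=
  G.verts.Nonempty ∧ G.Connected ∧ ∀ v ∈ G.verts, G.deg v = 2

/-- The set of non-branching vertices. -/
def NB (G : WGraph) : Set ℕ := {v | v ∈ G.verts ∧ G.deg v < 3}

/-- A linear segment: a connected component of the graph obtained by deleting
the branching points. -/
def IsSegment (G : WGraph) (S : Set ℕ) : Prop :=
  ∃ v ∈ G.NB, S = {u | Relation.ReflTransGen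
    (fun a b => a ∈ G.NB ∧ b ∈ G.NB ∧ G.adj a b = true) v u}

/-- `l` is a consecutive enumeration of the linear segment `S`. -/
def SegList (G : WGraph) (S : Set ℕ) (l : List ℕ) : Prop :=
  l.Nodup ∧ (∀ v, v ∈ l ↔ v ∈ S) ∧ l.Chain' (fun a b => G.adj a b = true)

/-- A standard weight sequence: all weights zero, or an even number `2k ≥ 0` of zeros
followed by weights `≤ -2`. -/
def StdSeq (m : List ℤ) : Prop :=
  (∀ x ∈ m, x = 0) ∨
  ∃ (k : ℕ) (ws : List ℤ), m = List.replicate (2 * k) 0 ++ ws ∧ ∀ x ∈ ws, x ≤ -2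

/-- A standard weighted graph: connected, and every linear segment, enumerated
consecutively starting (when the segment is adjacent to exactly one branching point)
from the vertex adjacent to that branching point, has a standard weight sequence. -/
def IsStandard (G : WGraph) : Prop :=
  G.Connected ∧
  ∀ S, G.IsSegment S → ∃ l, G.SegList S l ∧ StdSeq (l.map G.wt) ∧
    ∀ b, G.Branch b → (∃ v ∈ S, G.adj b v = true) →
      (∀ b', G.Branch b' → (∃ v' ∈ S, G.adj b' v' = true) → b' = b) →
      ∃ v0, l.head? = some v0 ∧ G.adj b v0 = true

/-- `G'` is obtained from `G` by the inner blowup at the edge `uv`, creating the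
new vertex `x`: the edge `uv` is deleted, `x` gets weight `-1` and is joined to
`u` and `v`, and the weights of `u` and `v` drop by `1`. -/
def IsInnerBlowup (G G' : WGraph) (u v x : ℕ) : Prop :=
  G.adj u v = true ∧ x ∉ G.verts ∧
  G'.verts = insert x G.verts ∧
  (∀ a b, G'.adj a b = true ↔
    ((G.adj a b = true ∧ ¬(a = u ∧ b = v) ∧ ¬(a = v ∧ b = u)) ∨
     (a = x ∧ (b = u ∨ b = v)) ∨ (b = x ∧ (a = u ∨ a = v)))) ∧
  (∀ a, G'.wt a = if a = x then -1 else if a = u then G.wt a - 1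
    else if a = v then G.wt a - 1 else G.wt a)

/-- `G'` is obtained from `G` by the outer blowup at the vertex `v`, creating the
new vertex `x` of weight `-1` joined only to `v`; the weight of `v` drops by `1`. -/
def IsOuterBlowup (G G' : WGraph) (v x : ℕ) : Prop :=
  v ∈ G.verts ∧ x ∉ G.verts ∧
  G'.verts = insert x G.verts ∧
  (∀ a b, G'.adj a b = true ↔
    (G.adj a b = true ∨ (a = x ∧ b = v) ∨ (b = x ∧ a = v))) ∧
  (∀ a, G'.wt a = if a = x then -1 else if a = v then G.wt a - 1 else G.wt a)

/-- A single blowup. -/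
def BlowupStep (G G' : WGraph) : Prop :=
  (∃ u v x, IsInnerBlowup G G' u v x) ∨ (∃ v x, IsOuterBlowup G G' v x)

/-- A single blowup or blowdown (a blowdown being the inverse of a blowup). -/
def Move (G G' : WGraph) : Prop := BlowupStep G G' ∨ BlowupStep G' G

/-- A weight-preserving isomorphism of weighted graphs. -/
def WIso (G G' : WGraph) : Prop :=
  ∃ f : ℕ → ℕ, Set.BijOn f (G.verts : Set ℕ) (G'.verts : Set ℕ) ∧
    (∀ u ∈ G.verts, ∀ v ∈ G.verts, G'.adj (f u) (f v) = G.adj u v) ∧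
    (∀ v ∈ G.verts, G'.wt (f v) = G.wt v)

/-- Birational equivalence of weighted graphs: the equivalence relation generated by
blowups, blowdowns and weight-preserving isomorphisms. -/
def BirEq : WGraph → WGraph → Prop :=
  Relation.EqvGen (fun G G' => Move G G' ∨ WIso G G')

end WGraph

namespace WGraph

/-- A linear segment of type `[[0_{2k+1}]]`: an odd number of vertices, all of
weight zero. -/
def OddZeroSegment (G : WGraph) (S : Set ℕ) : Prop :=
  G.IsSegment S ∧ ∃ l, G.SegList S l ∧ Odd l.length ∧ ∀ v ∈ l, G.wt v = 0

/-- The vertex set of the subgraph `Γ₀`: the branching points together with all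
linear segments of type `[[0_{2k+1}]]`. -/
def Gamma0V (G : WGraph) : Set ℕ :=
  {v | G.Branch v ∨ ∃ S, G.OddZeroSegment S ∧ v ∈ S}

/-- The adjacency of the subgraph `Γ₀`: edges of `Γ` inside the segments of type
`[[0_{2k+1}]]` and the edges joining these segments to branching points (but not
edges joining two branching points). -/
def Adj0 (G : WGraph) (a b : ℕ) : Prop :=
  G.adj a b = true ∧ a ∈ G.Gamma0V ∧ b ∈ G.Gamma0V ∧ ¬(G.Branch a ∧ G.Branch b)

/-- The connected component of `v` in the subgraph `Γ₀`. -/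
def Comp0 (G : WGraph) (v : ℕ) : Set ℕ := {u | Relation.ReflTransGen G.Adj0 v u}

end WGraph

attribute [local instance] Classical.propDecidable


namespace WGraph

/-- Replace the weight function of a graph. -/
def mkW (G : WGraph) (w : ℕ → ℤ) : WGraph :=
  { verts := G.verts, adj := G.adj, symm := G.symm, loopless := G.loopless,
    support := G.support, wt := w }

@[simp] lemma mkW_verts (G : WGraph) (w : ℕ → ℤ) : (G.mkW w).verts = G.verts := rfl
@[simp] lemma mkW_adj (G : WGraph) (w : ℕ → ℤ) : (G.mkW w).adj = G.adj := rfl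
@[simp] lemma mkW_wt (G : WGraph) (w : ℕ → ℤ) : (G.mkW w).wt = w := rfl
@[simp] lemma mkW_deg (G : WGraph) (w : ℕ → ℤ) : (G.mkW w).deg = G.deg := rfl
@[simp] lemma mkW_NB (G : WGraph) (w : ℕ → ℤ) : (G.mkW w).NB = G.NB := rfl
@[simp] lemma mkW_mkW (G : WGraph) (w w' : ℕ → ℤ) : (G.mkW w).mkW w' = G.mkW w' := rfl

lemma mkW_self (G : WGraph) : G.mkW G.wt = G := rfl

/-- The swap of two naturals. -/
def swp (z x n : ℕ) : ℕ := if n = z then x else if n = x then z else n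

lemma swp_swp (z x : ℕ) (n : ℕ) : swp z x (swp z x n) = n := by
  unfold swp
  by_cases h1 : n = z <;> by_cases h2 : n = x <;> simp_all

section UnitMove

variable (G : WGraph) (u z c : ℕ)

lemma exists_fresh (G : WGraph) : ∃ x : ℕ, x ∉ G.verts :=
  Finset.exists_notMem G.verts

/-- Core lemma: blow up the edge `u z` (where `z` has weight `0` and neighbours
exactly `u` and `c`), then blow down the old `z`:  the net effect transfers one
unit of weight from `u` to `c`. -/
theorem unitMove (huz : G.adj u z = true) (hzc : G.adj z c = true)
    (huc : u ≠ c) (hz : ∀ y, G.adj z y = true → y = u ∨ y = c) (hwz : G.wt z = 0)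
    (w' : ℕ → ℤ)
    (hw' : ∀ a, w' a = G.wt a - (if a = u then 1 else 0) + (if a = c then 1 else 0)) :
    BirEq G (G.mkW w') := by
  obtain ⟨x, hx⟩ := exists_fresh G
  have huv : u ∈ G.verts := (G.support u z huz).1
  have hzv : z ∈ G.verts := (G.support u z huz).2
  have hcv : c ∈ G.verts := (G.support z c hzc).2
  have hxu : x ≠ u := fun h => hx (h ▸ huv)
  have hxz : x ≠ z := fun h => hx (h ▸ hzv)
  have hxc : x ≠ c := fun h => hx (h ▸ hcv)
  have huz' : u ≠ z := by rintro rfl; simp [G.loopless] at huz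
  have hzc' : z ≠ c := by rintro rfl; simp [G.loopless] at hzc
  have hadjzu : G.adj z u = true := G.symm _ _ huz
  have hnadjx : ∀ y, G.adj x y ≠ true := fun y h => hx (G.support _ _ h).1
  have hnadjx' : ∀ y, G.adj y x ≠ true := fun y h => hx (G.support _ _ h).2
  -- the blown-up graph
  set σ : ℕ → ℕ := swp z x with hσ
  have hσz : σ z = x := by simp [hσ, swp]
  have hσx : σ x = z := by simp [hσ, swp, hxz]
  have hσo : ∀ n, n ≠ z → n ≠ x → σ n = n := by intro n h1 h2; simp [hσ, swp, h1, h2]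
  have hσσ : ∀ n, σ (σ n) = n := swp_swp z x
  let G1 : WGraph :=
  { verts := insert x G.verts
    adj := fun a b => decide ((G.adj a b = true ∧ ¬(a = u ∧ b = z) ∧ ¬(a = z ∧ b = u)) ∨
      (a = x ∧ (b = u ∨ b = z)) ∨ (b = x ∧ (a = u ∨ a = z)))
    symm := by
      intro a b h
      rw [decide_eq_true_iff] at h ⊢
      rcases h with ⟨h1, h2, h3⟩ | ⟨rfl, h⟩ | ⟨rfl, h⟩
      · exact Or.inl ⟨G.symm _ _ h1, fun ⟨p, q⟩ => h3 ⟨q, p⟩, fun ⟨p, q⟩ => h2 ⟨q, p⟩⟩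
      · exact Or.inr (Or.inr ⟨rfl, h⟩)
      · exact Or.inr (Or.inl ⟨rfl, h⟩)
    loopless := by
      intro a
      simp only [decide_eq_false_iff_not]
      rintro (⟨h1, -, -⟩ | ⟨h, (h' | h')⟩ | ⟨h, (h' | h')⟩) <;>
        first
          | simp [G.loopless] at h1
          | omega
    support := by
      intro a b h
      rw [decide_eq_true_iff] at h
      rcases h with ⟨h1, -, -⟩ | ⟨rfl, (rfl | rfl)⟩ | ⟨rfl, (rfl | rfl)⟩
      · exact ⟨Finset.mem_insert_of_mem (G.support _ _ h1).1,
          Finset.mem_insert_of_mem (G.support _ _ h1).2⟩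
      · exact ⟨Finset.mem_insert_self _ _, Finset.mem_insert_of_mem huv⟩
      · exact ⟨Finset.mem_insert_self _ _, Finset.mem_insert_of_mem hzv⟩
      · exact ⟨Finset.mem_insert_of_mem huv, Finset.mem_insert_self _ _⟩
      · exact ⟨Finset.mem_insert_of_mem hzv, Finset.mem_insert_self _ _⟩
    wt := fun a => if a = x then -1 else if a = u then G.wt a - 1
      else if a = z then G.wt a - 1 else G.wt a }
  have hstep1 : IsInnerBlowup G G1 u z x := by
    refine ⟨huz, hx, rfl, ?_, ?_⟩
    · intro a b; exact decide_eq_true_iff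
    · intro a; rfl
  -- weights of the intermediate target
  let w'' : ℕ → ℤ := fun a => if a = u then G.wt u - 1 else if a = c then G.wt c + 1 else G.wt a
  let G2 : WGraph :=
  { verts := insert x (G.verts.erase z)
    adj := fun a b => G.adj (σ a) (σ b)
    symm := fun a b h => G.symm _ _ h
    loopless := fun a => G.loopless (σ a)
    support := by
      intro a b h
      have h1 := G.support _ _ h
      have key : ∀ n, σ n ∈ G.verts → n ∈ insert x (G.verts.erase z) := by
        intro n hn
        by_cases h1 : n = z
        · subst h1; rw [hσz] at hn; exact absurd hn hx
        · by_cases h2 : n = x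
          · subst h2; exact Finset.mem_insert_self _ _
          · rw [hσo n h1 h2] at hn
            exact Finset.mem_insert_of_mem (Finset.mem_erase.2 ⟨h1, hn⟩)
      exact ⟨key _ h1.1, key _ h1.2⟩
    wt := fun a => w'' (σ a) }
  have hσc : σ c = c := hσo c hzc'.symm (Ne.symm hxc)
  have hσu : σ u = u := hσo u huz' (Ne.symm hxu)
  -- G1 is the inner blowup of G2 at the edge x c with new vertex z
  have hstep2 : IsInnerBlowup G2 G1 x c z := by
    refine ⟨?_, ?_, ?_, ?_, ?_⟩
    · show G.adj (σ x) (σ c) = true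
      rw [hσx, hσc]; exact hzc
    · simp [G2, hxz.symm]
    · show insert x G.verts = insert z (insert x (G.verts.erase z))
      ext a
      simp only [Finset.mem_insert, Finset.mem_erase]
      constructor
      · rintro (rfl | h)
        · exact Or.inr (Or.inl rfl)
        · by_cases ha : a = z
          · exact Or.inl ha
          · exact Or.inr (Or.inr ⟨ha, h⟩)
      · rintro (rfl | rfl | ⟨-, h⟩)
        · exact Or.inr hzv
        · exact Or.inl rfl
        · exact Or.inr h
    · intro a b
      show (decide _) = true ↔ _
      rw [decide_eq_true_iff]
      show _ ↔ (G.adj (σ a) (σ b) = true ∧ ¬(a = x ∧ b = c) ∧ ¬(a = c ∧ b = x)) ∨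
        (a = z ∧ (b = x ∨ b = c)) ∨ (b = z ∧ (a = x ∨ a = c))
      constructor
      · rintro (⟨h1, h2, h3⟩ | ⟨ha, (hb | hb)⟩ | ⟨hb, (ha | ha)⟩)
        · have hax : a ≠ x := fun h => hx (h ▸ (G.support _ _ h1).1)
          have hbx : b ≠ x := fun h => hx (h ▸ (G.support _ _ h1).2)
          by_cases haz : a = z
          · have h1' : G.adj z b = true := haz ▸ h1
            rcases hz b h1' with hbu | hbc
            · exact absurd ⟨haz, hbu⟩ h3
            · exact Or.inr (Or.inl ⟨haz, Or.inr hbc⟩)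
          · by_cases hbz : b = z
            · have h1' : G.adj z a = true := G.symm _ _ (hbz ▸ h1)
              rcases hz a h1' with hau | hac
              · exact absurd ⟨hau, hbz⟩ h2
              · exact Or.inr (Or.inr ⟨hbz, Or.inr hac⟩)
            · refine Or.inl ⟨?_, fun hp => hax hp.1, fun hp => hbx hp.2⟩
              rw [hσo a haz hax, hσo b hbz hbx]
              exact h1
        · refine Or.inl ⟨?_, ?_, ?_⟩
          · rw [ha, hb, hσx, hσu]; exact G.symm _ _ huz
          · rintro ⟨-, hbc⟩; exact huc (hb.symm.trans hbc)
          · rintro ⟨hac, -⟩; exact hxc (ha.symm.trans hac)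
        · exact Or.inr (Or.inr ⟨hb, Or.inl ha⟩)
        · refine Or.inl ⟨?_, ?_, ?_⟩
          · rw [ha, hb, hσu, hσx]; exact huz
          · rintro ⟨hax2, -⟩; exact hxu (hax2.symm.trans ha)
          · rintro ⟨hac, -⟩; exact huc (ha.symm.trans hac)
        · exact Or.inr (Or.inl ⟨ha, Or.inl hb⟩)
      · rintro (⟨h1, h2, h3⟩ | ⟨ha, (hb | hb)⟩ | ⟨hb, (ha | ha)⟩)
        · by_cases haz : a = z
          · rw [haz, hσz] at h1
            exact absurd h1 (hnadjx _)
          · by_cases hbz : b = z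
            · rw [hbz, hσz] at h1
              exact absurd h1 (hnadjx' _)
            · by_cases hax : a = x
              · rw [hax, hσx] at h1
                by_cases hbx : b = x
                · rw [hbx, hσx] at h1; simp [G.loopless] at h1
                · rw [hσo b hbz hbx] at h1
                  rcases hz b h1 with hbu | hbc
                  · exact Or.inr (Or.inl ⟨hax, Or.inl hbu⟩)
                  · exact absurd ⟨hax, hbc⟩ h2
              · by_cases hbx : b = x
                · rw [hbx, hσx, hσo a haz hax] at h1
                  rcases hz a (G.symm _ _ h1) with hau | hac
                  · exact Or.inr (Or.inr ⟨hbx, Or.inl hau⟩)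
                  · exact absurd ⟨hac, hbx⟩ h3
                · rw [hσo a haz hax, hσo b hbz hbx] at h1
                  exact Or.inl ⟨h1, fun hp => hbz hp.2, fun hp => haz hp.1⟩
        · exact Or.inr (Or.inr ⟨hb, Or.inr ha⟩)
        · refine Or.inl ⟨?_, ?_, ?_⟩
          · rw [ha, hb]; exact hzc
          · rintro ⟨hau, -⟩; exact huz' (hau.symm.trans ha)
          · rintro ⟨-, hbu⟩; exact huc (hbu.symm.trans hb)
        · exact Or.inr (Or.inl ⟨ha, Or.inr hb⟩)
        · refine Or.inl ⟨?_, ?_, ?_⟩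
          · rw [ha, hb]; exact G.symm _ _ hzc
          · rintro ⟨hau, -⟩; exact huc (hau.symm.trans ha)
          · rintro ⟨haz2, -⟩; exact hzc' (haz2.symm.trans ha)
    · intro a
      show _ = if a = z then (-1 : ℤ) else if a = x then w'' (σ a) - 1
        else if a = c then w'' (σ a) - 1 else w'' (σ a)
      show (if a = x then (-1:ℤ) else if a = u then G.wt a - 1
        else if a = z then G.wt a - 1 else G.wt a) = _
      by_cases haz : a = z
      · subst haz; simp [hxz.symm, huz'.symm, hwz]
      · by_cases hax : a = x
        · subst hax; simp [hσx, w'', Ne.symm huz', hzc', hwz, hxz]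
        · rw [hσo a haz hax]
          by_cases hau : a = u
          · subst hau; simp [hax, haz, w'', huc, hxu.symm]
          · by_cases hac : a = c
            · subst hac; simp [hax, haz, hau, w'']
            · simp [hax, haz, hau, hac, w'']
  -- the weight-preserving isomorphism from the target to G2
  have hiso : WIso (G.mkW w') G2 := by
    refine ⟨σ, ⟨?_, ?_, ?_⟩, ?_, ?_⟩
    · intro a ha
      simp only [mkW_verts] at ha
      by_cases h1 : a = z
      · subst h1; rw [hσz]; exact Finset.mem_insert_self _ _
      · have h2 : a ≠ x := fun h => hx (h ▸ ha)
        rw [hσo a h1 h2]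
        exact Finset.mem_insert_of_mem (Finset.mem_erase.2 ⟨h1, ha⟩)
    · intro a _ b _ h
      have := congrArg σ h
      rwa [hσσ, hσσ] at this
    · intro b hb
      simp only [G2, Finset.coe_insert, Set.mem_insert_iff, Finset.coe_erase,
        Set.mem_diff, Finset.mem_coe] at hb
      refine ⟨σ b, ?_, hσσ b⟩
      rcases hb with rfl | ⟨hb, hbz⟩
      · rw [hσx]; exact hzv
      · have hbx : b ≠ x := fun h => hx (h ▸ hb)
        have hbz' : b ≠ z := by simpa using hbz
        rw [hσo b hbz' hbx]; exact hb
    · intro a ha b hb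
      show G.adj (σ (σ a)) (σ (σ b)) = G.adj a b
      rw [hσσ, hσσ]
    · intro a ha
      show w'' (σ (σ a)) = w' a
      rw [hσσ, hw' a]
      by_cases hau : a = u
      · subst hau; simp [w'', huc]
      · by_cases hac : a = c
        · subst hac; simp [w'', hau]
        · simp [w'', hau, hac]
  -- assemble
  have r1 : Move G G1 := Or.inl (Or.inl ⟨u, z, x, hstep1⟩)
  have r2 : Move G1 G2 := Or.inr (Or.inl ⟨x, c, z, hstep2⟩)
  exact Relation.EqvGen.trans _ _ _ (Relation.EqvGen.rel _ _ (Or.inl r1))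
    (Relation.EqvGen.trans _ _ _ (Relation.EqvGen.rel _ _ (Or.inl r2))
      (Relation.EqvGen.symm _ _ (Relation.EqvGen.rel _ _ (Or.inr hiso))))

end UnitMove

end WGraph

namespace WGraph

section UnitDrop

variable (G : WGraph) (u z : ℕ)

/-- Core lemma, end version: blow up the edge `u z` (where `z` has weight `0` and
`u` as its only neighbour), then blow down the old `z`:  the net effect decreases
the weight of `u` by one. -/
theorem unitDrop (huz : G.adj u z = true)
    (hz : ∀ y, G.adj z y = true → y = u) (hwz : G.wt z = 0)
    (w' : ℕ → ℤ)
    (hw' : ∀ a, w' a = G.wt a - (if a = u then 1 else 0)) :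
    BirEq G (G.mkW w') := by
  obtain ⟨x, hx⟩ := exists_fresh G
  have huv : u ∈ G.verts := (G.support u z huz).1
  have hzv : z ∈ G.verts := (G.support u z huz).2
  have hxu : x ≠ u := fun h => hx (h ▸ huv)
  have hxz : x ≠ z := fun h => hx (h ▸ hzv)
  have huz' : u ≠ z := by rintro rfl; simp [G.loopless] at huz
  have hadjzu : G.adj z u = true := G.symm _ _ huz
  have hnadjx : ∀ y, G.adj x y ≠ true := fun y h => hx (G.support _ _ h).1
  have hnadjx' : ∀ y, G.adj y x ≠ true := fun y h => hx (G.support _ _ h).2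
  set σ : ℕ → ℕ := swp z x with hσ
  have hσz : σ z = x := by simp [hσ, swp]
  have hσx : σ x = z := by simp [hσ, swp, hxz]
  have hσo : ∀ n, n ≠ z → n ≠ x → σ n = n := by intro n h1 h2; simp [hσ, swp, h1, h2]
  have hσσ : ∀ n, σ (σ n) = n := swp_swp z x
  have hσu : σ u = u := hσo u huz' (Ne.symm hxu)
  let G1 : WGraph :=
  { verts := insert x G.verts
    adj := fun a b => decide ((G.adj a b = true ∧ ¬(a = u ∧ b = z) ∧ ¬(a = z ∧ b = u)) ∨
      (a = x ∧ (b = u ∨ b = z)) ∨ (b = x ∧ (a = u ∨ a = z)))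
    symm := by
      intro a b h
      rw [decide_eq_true_iff] at h ⊢
      rcases h with ⟨h1, h2, h3⟩ | ⟨rfl, h⟩ | ⟨rfl, h⟩
      · exact Or.inl ⟨G.symm _ _ h1, fun ⟨p, q⟩ => h3 ⟨q, p⟩, fun ⟨p, q⟩ => h2 ⟨q, p⟩⟩
      · exact Or.inr (Or.inr ⟨rfl, h⟩)
      · exact Or.inr (Or.inl ⟨rfl, h⟩)
    loopless := by
      intro a
      simp only [decide_eq_false_iff_not]
      rintro (⟨h1, -, -⟩ | ⟨h, (h' | h')⟩ | ⟨h, (h' | h')⟩) <;>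
        first
          | simp [G.loopless] at h1
          | omega
    support := by
      intro a b h
      rw [decide_eq_true_iff] at h
      rcases h with ⟨h1, -, -⟩ | ⟨rfl, (rfl | rfl)⟩ | ⟨rfl, (rfl | rfl)⟩
      · exact ⟨Finset.mem_insert_of_mem (G.support _ _ h1).1,
          Finset.mem_insert_of_mem (G.support _ _ h1).2⟩
      · exact ⟨Finset.mem_insert_self _ _, Finset.mem_insert_of_mem huv⟩
      · exact ⟨Finset.mem_insert_self _ _, Finset.mem_insert_of_mem hzv⟩
      · exact ⟨Finset.mem_insert_of_mem huv, Finset.mem_insert_self _ _⟩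
      · exact ⟨Finset.mem_insert_of_mem hzv, Finset.mem_insert_self _ _⟩
    wt := fun a => if a = x then -1 else if a = u then G.wt a - 1
      else if a = z then G.wt a - 1 else G.wt a }
  have hstep1 : IsInnerBlowup G G1 u z x := by
    refine ⟨huz, hx, rfl, ?_, ?_⟩
    · intro a b; exact decide_eq_true_iff
    · intro a; rfl
  let w'' : ℕ → ℤ := fun a => if a = u then G.wt u - 1 else G.wt a
  let G2 : WGraph :=
  { verts := insert x (G.verts.erase z)
    adj := fun a b => G.adj (σ a) (σ b)
    symm := fun a b h => G.symm _ _ h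
    loopless := fun a => G.loopless (σ a)
    support := by
      intro a b h
      have h1 := G.support _ _ h
      have key : ∀ n, σ n ∈ G.verts → n ∈ insert x (G.verts.erase z) := by
        intro n hn
        by_cases h1 : n = z
        · subst h1; rw [hσz] at hn; exact absurd hn hx
        · by_cases h2 : n = x
          · subst h2; exact Finset.mem_insert_self _ _
          · rw [hσo n h1 h2] at hn
            exact Finset.mem_insert_of_mem (Finset.mem_erase.2 ⟨h1, hn⟩)
      exact ⟨key _ h1.1, key _ h1.2⟩
    wt := fun a => w'' (σ a) }
  have hstep2 : IsOuterBlowup G2 G1 x z := by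
    refine ⟨Finset.mem_insert_self _ _, ?_, ?_, ?_, ?_⟩
    · simp [G2, hxz.symm]
    · show insert x G.verts = insert z (insert x (G.verts.erase z))
      ext a
      simp only [Finset.mem_insert, Finset.mem_erase]
      constructor
      · rintro (rfl | h)
        · exact Or.inr (Or.inl rfl)
        · by_cases ha : a = z
          · exact Or.inl ha
          · exact Or.inr (Or.inr ⟨ha, h⟩)
      · rintro (rfl | rfl | ⟨-, h⟩)
        · exact Or.inr hzv
        · exact Or.inl rfl
        · exact Or.inr h
    · intro a b
      show (decide _) = true ↔ _
      rw [decide_eq_true_iff]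
      show _ ↔ (G.adj (σ a) (σ b) = true) ∨ (a = z ∧ b = x) ∨ (b = z ∧ a = x)
      constructor
      · rintro (⟨h1, h2, h3⟩ | ⟨ha, (hb | hb)⟩ | ⟨hb, (ha | ha)⟩)
        · have hax : a ≠ x := fun h => hx (h ▸ (G.support _ _ h1).1)
          have hbx : b ≠ x := fun h => hx (h ▸ (G.support _ _ h1).2)
          by_cases haz : a = z
          · exact absurd ⟨haz, hz b (haz ▸ h1)⟩ h3
          · by_cases hbz : b = z
            · exact absurd ⟨hz a (G.symm _ _ (hbz ▸ h1)), hbz⟩ h2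
            · rw [hσo a haz hax, hσo b hbz hbx]
              exact Or.inl h1
        · refine Or.inl ?_
          rw [ha, hb, hσx, hσu]; exact G.symm _ _ huz
        · exact Or.inr (Or.inr ⟨hb, ha⟩)
        · refine Or.inl ?_
          rw [ha, hb, hσu, hσx]; exact huz
        · exact Or.inr (Or.inl ⟨ha, hb⟩)
      · rintro (h1 | ⟨ha, hb⟩ | ⟨hb, ha⟩)
        · by_cases haz : a = z
          · rw [haz, hσz] at h1
            exact absurd h1 (hnadjx _)
          · by_cases hbz : b = z
            · rw [hbz, hσz] at h1
              exact absurd h1 (hnadjx' _)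
            · by_cases hax : a = x
              · rw [hax, hσx] at h1
                by_cases hbx : b = x
                · rw [hbx, hσx] at h1; simp [G.loopless] at h1
                · rw [hσo b hbz hbx] at h1
                  exact Or.inr (Or.inl ⟨hax, Or.inl (hz b h1)⟩)
              · by_cases hbx : b = x
                · rw [hbx, hσx, hσo a haz hax] at h1
                  exact Or.inr (Or.inr ⟨hbx, Or.inl (hz a (G.symm _ _ h1))⟩)
                · rw [hσo a haz hax, hσo b hbz hbx] at h1
                  exact Or.inl ⟨h1, fun hp => hbz hp.2, fun hp => haz hp.1⟩
        · exact Or.inr (Or.inr ⟨hb, Or.inr ha⟩)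
        · exact Or.inr (Or.inl ⟨ha, Or.inr hb⟩)
    · intro a
      show (if a = x then (-1:ℤ) else if a = u then G.wt a - 1
        else if a = z then G.wt a - 1 else G.wt a) =
        if a = z then -1 else if a = x then w'' (σ a) - 1 else w'' (σ a)
      by_cases haz : a = z
      · subst haz; simp [hxz.symm, Ne.symm huz', hwz]
      · by_cases hax : a = x
        · subst hax; simp [hσx, w'', Ne.symm huz', hwz, hxz]
        · rw [hσo a haz hax]
          by_cases hau : a = u
          · subst hau; simp [hax, haz, w'']
          · simp [hax, haz, hau, w'']
  have hiso : WIso (G.mkW w') G2 := by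
    refine ⟨σ, ⟨?_, ?_, ?_⟩, ?_, ?_⟩
    · intro a ha
      simp only [mkW_verts] at ha
      by_cases h1 : a = z
      · subst h1; rw [hσz]; exact Finset.mem_insert_self _ _
      · have h2 : a ≠ x := fun h => hx (h ▸ ha)
        rw [hσo a h1 h2]
        exact Finset.mem_insert_of_mem (Finset.mem_erase.2 ⟨h1, ha⟩)
    · intro a _ b _ h
      have := congrArg σ h
      rwa [hσσ, hσσ] at this
    · intro b hb
      simp only [G2, Finset.coe_insert, Set.mem_insert_iff, Finset.coe_erase,
        Set.mem_diff, Finset.mem_coe] at hb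
      refine ⟨σ b, ?_, hσσ b⟩
      rcases hb with rfl | ⟨hb, hbz⟩
      · rw [hσx]; exact hzv
      · have hbx : b ≠ x := fun h => hx (h ▸ hb)
        have hbz' : b ≠ z := by simpa using hbz
        rw [hσo b hbz' hbx]; exact hb
    · intro a ha b hb
      show G.adj (σ (σ a)) (σ (σ b)) = G.adj a b
      rw [hσσ, hσσ]
    · intro a ha
      show w'' (σ (σ a)) = w' a
      rw [hσσ, hw' a]
      by_cases hau : a = u
      · subst hau; simp [w'']
      · simp [w'', hau]
  have r1 : Move G G1 := Or.inl (Or.inl ⟨u, z, x, hstep1⟩)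
  have r2 : Move G1 G2 := Or.inr (Or.inr ⟨x, z, hstep2⟩)
  exact Relation.EqvGen.trans _ _ _ (Relation.EqvGen.rel _ _ (Or.inl r1))
    (Relation.EqvGen.trans _ _ _ (Relation.EqvGen.rel _ _ (Or.inl r2))
      (Relation.EqvGen.symm _ _ (Relation.EqvGen.rel _ _ (Or.inr hiso))))

end UnitDrop

end WGraph

namespace WGraph

lemma card_le_deg (G : WGraph) (v : ℕ) (s : Finset ℕ)
    (hs : ∀ a ∈ s, G.adj v a = true) : s.card ≤ G.deg v := by
  apply Finset.card_le_card
  intro a ha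
  exact Finset.mem_filter.2 ⟨(G.support _ _ (hs a ha)).2, hs a ha⟩

lemma neighbors_pair (G : WGraph) {v a b : ℕ} (hd : G.deg v ≤ 2)
    (ha : G.adj v a = true) (hb : G.adj v b = true) (hab : a ≠ b) :
    ∀ y, G.adj v y = true → y = a ∨ y = b := by
  intro y hy
  by_contra h
  push_neg at h
  have hcard : ({y, a, b} : Finset ℕ).card ≤ G.deg v := by
    apply card_le_deg
    intro t ht
    simp only [Finset.mem_insert, Finset.mem_singleton] at ht
    rcases ht with rfl | rfl | rfl <;> assumption
  have : ({y, a, b} : Finset ℕ).card = 3 := by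
    rw [Finset.card_insert_of_notMem (by simp [h.1, h.2]),
      Finset.card_insert_of_notMem (by simp [hab])]
    rfl
  omega

lemma neighbors_single (G : WGraph) {v a : ℕ} (hd : G.deg v ≤ 1)
    (ha : G.adj v a = true) : ∀ y, G.adj v y = true → y = a := by
  intro y hy
  by_contra h
  have hcard : ({y, a} : Finset ℕ).card ≤ G.deg v := by
    apply card_le_deg
    intro t ht
    simp only [Finset.mem_insert, Finset.mem_singleton] at ht
    rcases ht with rfl | rfl <;> assumption
  have : ({y, a} : Finset ℕ).card = 2 := by
    rw [Finset.card_insert_of_notMem (by simp [h])]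
    rfl
  omega

lemma three_le_deg (G : WGraph) {v a b c : ℕ}
    (ha : G.adj v a = true) (hb : G.adj v b = true) (hc : G.adj v c = true)
    (hab : a ≠ b) (hac : a ≠ c) (hbc : b ≠ c) : 3 ≤ G.deg v := by
  have hcard : ({a, b, c} : Finset ℕ).card ≤ G.deg v := by
    apply card_le_deg
    intro t ht
    simp only [Finset.mem_insert, Finset.mem_singleton] at ht
    rcases ht with rfl | rfl | rfl <;> assumption
  have : ({a, b, c} : Finset ℕ).card = 3 := by
    rw [Finset.card_insert_of_notMem (by simp [hab, hac]),
      Finset.card_insert_of_notMem (by simp [hbc])]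
    rfl
  omega

lemma two_le_deg (G : WGraph) {v a b : ℕ}
    (ha : G.adj v a = true) (hb : G.adj v b = true) (hab : a ≠ b) : 2 ≤ G.deg v := by
  have hcard : ({a, b} : Finset ℕ).card ≤ G.deg v := by
    apply card_le_deg
    intro t ht
    simp only [Finset.mem_insert, Finset.mem_singleton] at ht
    rcases ht with rfl | rfl <;> assumption
  have : ({a, b} : Finset ℕ).card = 2 := by
    rw [Finset.card_insert_of_notMem (by simp [hab])]
    rfl
  omega

/-- Transfer one unit of weight from `c` to `c'` along a chain of zero-weight
vertices of degree at most two. -/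
theorem listTransfer (G0 : WGraph) (n : ℕ) :
    ∀ (l : List ℕ), l.length ≤ n → ∀ (c c' : ℕ) (w : ℕ → ℤ), Odd l.length →
    (c :: (l ++ [c'])).IsChain (fun a b => G0.adj a b = true) →
    (c :: (l ++ [c'])).Nodup →
    (∀ z ∈ l, G0.deg z ≤ 2) →
    (∀ z ∈ l, w z = 0) →
    ∀ w', (∀ a, w' a = w a - (if a = c then 1 else 0) + (if a = c' then 1 else 0)) →
    BirEq (G0.mkW w) (G0.mkW w') := by
  induction n with
  | zero =>
    intro l hl c c' w hodd _ _ _ _ _ _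
    rw [Nat.le_zero, List.length_eq_zero_iff] at hl
    rw [hl] at hodd
    simp at hodd
  | succ n ih =>
    rintro (_ | ⟨z1, (_ | ⟨z2, rest⟩)⟩) hl c c' w hodd hch hnd hdeg hw0 w' hw'
    · simp at hodd
    · -- base case : single vertex z1
      simp only [List.singleton_append, List.isChain_cons_cons] at hch
      obtain ⟨hcz, hzc', -⟩ := hch
      simp only [List.singleton_append, List.nodup_cons, List.mem_cons,
        List.not_mem_nil, or_false, List.mem_singleton, List.nodup_nil] at hnd
      have hcc' : c ≠ c' := fun h => hnd.1 (Or.inr h)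
      have hneigh : ∀ y, G0.adj z1 y = true → y = c ∨ y = c' :=
        neighbors_pair G0 (hdeg z1 (by simp)) (G0.symm _ _ hcz) hzc' hcc'
      have := unitMove (G0.mkW w) c z1 c' hcz hzc' hcc' hneigh
        (hw0 z1 (by simp)) w' (fun a => hw' a)
      simpa using this
    · -- inductive step
      have hodd' : Odd rest.length := by
        simp only [List.length_cons] at hodd ⊢
        rcases hodd with ⟨k, hk⟩
        exact ⟨k - 1, by omega⟩
      rw [List.cons_append, List.cons_append] at hch hnd
      rw [List.isChain_cons_cons, List.isChain_cons_cons] at hch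
      obtain ⟨hcz1, hz12, hch'⟩ := hch
      rw [List.nodup_cons, List.nodup_cons] at hnd
      obtain ⟨hc1, hz1n, hnd'⟩ := hnd
      have hz2n : z2 ∉ rest ++ [c'] := (List.nodup_cons.1 hnd').1
      have hcz2 : c ≠ z2 := fun h => hc1 (by simp [h])
      have hz1z2 : z1 ≠ z2 := fun h => hz1n (by simp [h])
      have hneigh : ∀ y, G0.adj z1 y = true → y = c ∨ y = z2 :=
        neighbors_pair G0 (hdeg z1 (by simp)) (G0.symm _ _ hcz1) hz12 hcz2
      set w1 : ℕ → ℤ :=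
        fun a => w a - (if a = c then 1 else 0) + (if a = z2 then 1 else 0) with hw1
      have step1 : BirEq (G0.mkW w) (G0.mkW w1) := by
        have := unitMove (G0.mkW w) c z1 z2 hcz1 hz12 hcz2 hneigh
          (hw0 z1 (by simp)) w1 (fun a => rfl)
        simpa using this
      have step2 : BirEq (G0.mkW w1) (G0.mkW w') := by
        refine ih rest ?_ z2 c' w1 hodd' hch' hnd' ?_ ?_ w' ?_
        · simp only [List.length_cons] at hl; omega
        · intro z hz; exact hdeg z (by simp [hz])
        · intro z hz
          have h1 : z ≠ c := by
            intro h; subst h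
            exact hc1 (by simp [hz])
          have h2 : z ≠ z2 := by
            intro h; subst h
            exact hz2n (by simp [hz])
          simp [hw1, h1, h2, hw0 z (by simp [hz])]
        · intro a
          rw [hw' a, hw1]
          ring
      exact Relation.EqvGen.trans _ _ _ step1 step2

/-- Drop one unit of weight from `c` along a chain of zero-weight vertices of
degree at most two ending in a vertex of degree one. -/
theorem listDrain (G0 : WGraph) (n : ℕ) :
    ∀ (l : List ℕ), l.length ≤ n → ∀ (c : ℕ) (w : ℕ → ℤ), Odd l.length →
    (c :: l).IsChain (fun a b => G0.adj a b = true) →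
    (c :: l).Nodup →
    (∀ z ∈ l, G0.deg z ≤ 2) →
    (∀ z ∈ l.getLast?, G0.deg z ≤ 1) →
    (∀ z ∈ l, w z = 0) →
    ∀ w', (∀ a, w' a = w a - (if a = c then 1 else 0)) →
    BirEq (G0.mkW w) (G0.mkW w') := by
  induction n with
  | zero =>
    intro l hl c w hodd _ _ _ _ _ _ _
    rw [Nat.le_zero, List.length_eq_zero_iff] at hl
    rw [hl] at hodd
    simp at hodd
  | succ n ih =>
    rintro (_ | ⟨z1, (_ | ⟨z2, rest⟩)⟩) hl c w hodd hch hnd hdeg hlast hw0 w' hw'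
    · simp at hodd
    · rw [List.isChain_cons_cons] at hch
      obtain ⟨hcz, -⟩ := hch
      have hneigh : ∀ y, G0.adj z1 y = true → y = c :=
        neighbors_single G0 (hlast z1 (by simp [List.getLast?])) (G0.symm _ _ hcz)
      have := unitDrop (G0.mkW w) c z1 hcz hneigh (hw0 z1 (by simp)) w' (fun a => hw' a)
      simpa using this
    · have hodd' : Odd rest.length := by
        simp only [List.length_cons] at hodd ⊢
        rcases hodd with ⟨k, hk⟩
        exact ⟨k - 1, by omega⟩
      have hrestne : rest ≠ [] := by
        intro h
        rw [h] at hodd'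
        simp at hodd'
      rw [List.isChain_cons_cons, List.isChain_cons_cons] at hch
      obtain ⟨hcz1, hz12, hch'⟩ := hch
      rw [List.nodup_cons, List.nodup_cons] at hnd
      obtain ⟨hc1, hz1n, hnd'⟩ := hnd
      have hz2n : z2 ∉ rest := (List.nodup_cons.1 hnd').1
      have hcz2 : c ≠ z2 := fun h => hc1 (by simp [h])
      have hz1z2 : z1 ≠ z2 := fun h => hz1n (by simp [h])
      have hneigh : ∀ y, G0.adj z1 y = true → y = c ∨ y = z2 :=
        neighbors_pair G0 (hdeg z1 (by simp)) (G0.symm _ _ hcz1) hz12 hcz2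
      set w1 : ℕ → ℤ :=
        fun a => w a - (if a = c then 1 else 0) + (if a = z2 then 1 else 0) with hw1
      have step1 : BirEq (G0.mkW w) (G0.mkW w1) := by
        have := unitMove (G0.mkW w) c z1 z2 hcz1 hz12 hcz2 hneigh
          (hw0 z1 (by simp)) w1 (fun a => rfl)
        simpa using this
      have step2 : BirEq (G0.mkW w1) (G0.mkW w') := by
        refine ih rest ?_ z2 w1 hodd' hch' hnd' ?_ ?_ ?_ w' ?_
        · simp only [List.length_cons] at hl; omega
        · intro z hz; exact hdeg z (by simp [hz])
        · intro z hz
          apply hlast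
          rw [List.getLast?_cons_cons]
          obtain ⟨r, rs, rfl⟩ : ∃ r rs, rest = r :: rs := by
            cases rest with
            | nil => exact absurd rfl hrestne
            | cons r rs => exact ⟨r, rs, rfl⟩
          rw [List.getLast?_cons_cons]
          exact hz
        · intro z hz
          have h1 : z ≠ c := by
            intro h; subst h
            exact hc1 (by simp [hz])
          have h2 : z ≠ z2 := by
            intro h; subst h
            exact hz2n hz
          simp [hw1, h1, h2, hw0 z (by simp [hz])]
        · intro a
          rw [hw' a, hw1]
          ring
      exact Relation.EqvGen.trans _ _ _ step1 step2

end WGraph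

namespace WGraph

/-- A branch point touches a set. -/
def Tch (G : WGraph) (c : ℕ) (S : Set ℕ) : Prop := ∃ v ∈ S, G.adj c v = true

lemma seg_mem_NB (G : WGraph) {S : Set ℕ} (hS : G.IsSegment S) {v : ℕ} (hv : v ∈ S) :
    v ∈ G.NB := by
  obtain ⟨v0, hv0, rfl⟩ := hS
  rcases Relation.ReflTransGen.cases_tail hv with rfl | ⟨c, -, hr⟩
  · exact hv0
  · exact hr.2.1

lemma seg_closed (G : WGraph) {S : Set ℕ} (hS : G.IsSegment S) {a b : ℕ}
    (ha : a ∈ S) (hb : b ∈ G.NB) (hab : G.adj a b = true) : b ∈ S := by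
  have haNB := seg_mem_NB G hS ha
  obtain ⟨v0, hv0, rfl⟩ := hS
  exact Relation.ReflTransGen.tail ha ⟨haNB, hb, hab⟩

lemma branch_not_NB (G : WGraph) {c : ℕ} (hc : G.Branch c) : c ∉ G.NB := by
  intro h
  have h1 := h.2
  have h2 := hc.2
  omega

lemma interior_neighbors (G : WGraph) {l : List ℕ} {v : ℕ}
    (hnd : l.Nodup) (hch : l.IsChain (fun a b => G.adj a b = true))
    (hv : v ∈ l) (hhead : l.head? ≠ some v) (hlast : l.getLast? ≠ some v) :
    ∃ p q, p ≠ q ∧ p ∈ l ∧ q ∈ l ∧ G.adj v p = true ∧ G.adj v q = true := by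
  obtain ⟨s, t, rfl⟩ := List.append_of_mem hv
  cases s with
  | nil => simp at hhead
  | cons s0 s' =>
    cases t with
    | nil =>
      rw [show (s0 :: s') ++ v :: [] = (s0 :: s') ++ [v] from rfl,
        List.getLast?_concat] at hlast
      exact absurd rfl hlast
    | cons q t' =>
      rw [List.isChain_append] at hch
      obtain ⟨-, hch2, hlink⟩ := hch
      have hsne : (s0 :: s') ≠ [] := by simp
      set p := (s0 :: s').getLast hsne with hp
      have hps : p ∈ s0 :: s' := List.getLast_mem hsne
      have hpv : G.adj p v = true := by
        apply hlink p (by rw [List.getLast?_eq_getLast hsne]; simp [hp]) v rfl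
      have hvq : G.adj v q = true := (List.isChain_cons_cons.1 hch2).1
      have hdisj := List.disjoint_of_nodup_append hnd
      have hpv' : p ≠ v := fun h => (hdisj hps (h ▸ List.mem_cons_self))
      have hpq : p ≠ q := fun h => (hdisj hps (h ▸ List.mem_cons_of_mem _ (List.mem_cons_self)))
      have hqv : q ≠ v := by
        have := (List.nodup_append.1 hnd).2.1
        intro h
        rw [List.nodup_cons] at this
        exact this.1 (h ▸ List.mem_cons_self)
      exact ⟨p, q, hpq, List.mem_append_left _ hps,
        List.mem_append_right _ (List.mem_cons_of_mem _ (List.mem_cons_self)),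
        G.symm _ _ hpv, hvq⟩

lemma touch_endpoint (G : WGraph) {l : List ℕ} {v c : ℕ}
    (hnd : l.Nodup) (hch : l.IsChain (fun a b => G.adj a b = true))
    (hNB : ∀ x ∈ l, x ∈ G.NB)
    (hc : G.Branch c) (hcv : G.adj c v = true) (hv : v ∈ l) :
    l.head? = some v ∨ l.getLast? = some v := by
  by_contra h
  push_neg at h
  obtain ⟨p, q, hpq, hpl, hql, hvp, hvq⟩ :=
    interior_neighbors G hnd hch hv h.1 h.2
  have hcl : c ∉ l := fun hcl => branch_not_NB G hc (hNB c hcl)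
  have hcp : p ≠ c := fun hh => hcl (hh ▸ hpl)
  have hcq : q ≠ c := fun hh => hcl (hh ▸ hql)
  have h3 : 3 ≤ G.deg v := three_le_deg G hvp hvq (G.symm _ _ hcv) hpq hcp hcq
  have := (hNB v hv).2
  omega

/-- The normalised version of the segment transfer: `c` is attached at the head,
`c'` at the end. -/
theorem segTransferAux (Γ : WGraph) (l : List ℕ) (c c' : ℕ)
    (hne : l ≠ []) (hodd : Odd l.length) (hnd : l.Nodup)
    (hch : l.IsChain (fun a b => Γ.adj a b = true))
    (hNB : ∀ x ∈ l, x ∈ Γ.NB)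
    (hcl : c ∉ l) (hc'l : c' ∉ l) (hcc' : c ≠ c')
    (hchd : ∀ y ∈ l.head?, Γ.adj c y = true)
    (hclast : ∀ y ∈ l.getLast?, Γ.adj y c' = true)
    (w : ℕ → ℤ) (hw0 : ∀ z ∈ l, w z = 0)
    (w' : ℕ → ℤ) (hw' : ∀ a, w' a = w a - (if a = c then 1 else 0) + (if a = c' then 1 else 0)) :
    BirEq (Γ.mkW w) (Γ.mkW w') := by
  apply listTransfer Γ l.length l le_rfl c c' w hodd _ _ _ hw0 w' hw'
  · -- chain
    rw [List.isChain_cons]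
    constructor
    · intro y hy
      apply hchd
      cases l with
      | nil => simp at hne
      | cons a l' => simpa using hy
    · rw [List.isChain_append]
      refine ⟨hch, List.isChain_singleton _, ?_⟩
      intro x hx y hy
      simp only [List.head?_cons, Option.mem_def, Option.some.injEq] at hy
      subst hy
      exact hclast x hx
  · -- nodup
    rw [List.nodup_cons, List.nodup_append]
    refine ⟨?_, hnd, List.nodup_singleton _, ?_⟩
    · intro hmem
      rcases List.mem_append.1 hmem with h | h
      · exact hcl h
      · exact hcc' (by simpa using h)
    · intro a ha b hb hab
      simp only [List.mem_singleton] at hb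
      subst hb
      exact hc'l (hab ▸ ha)
  · intro z hz
    have := (hNB z hz).2
    omega

/-- Transfer one unit of weight from branch `c` to branch `c'` along an odd
zero segment touching both. -/
theorem segTransfer (Γ : WGraph) (S : Set ℕ) (hS : Γ.OddZeroSegment S)
    (c c' : ℕ) (hc : Γ.Branch c) (hc' : Γ.Branch c') (hcc' : c ≠ c')
    (htc : Tch Γ c S) (htc' : Tch Γ c' S)
    (w : ℕ → ℤ) (hw0 : ∀ z ∈ S, w z = 0)
    (w' : ℕ → ℤ) (hw' : ∀ a, w' a = w a - (if a = c then 1 else 0) + (if a = c' then 1 else 0)) :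
    BirEq (Γ.mkW w) (Γ.mkW w') := by
  obtain ⟨hSeg, l, ⟨hnd, hmem, hch⟩, hodd, -⟩ := hS
  have hNB : ∀ x ∈ l, x ∈ Γ.NB := fun x hx => seg_mem_NB Γ hSeg ((hmem x).1 hx)
  obtain ⟨v, hvS, hcv⟩ := htc
  obtain ⟨v', hv'S, hc'v⟩ := htc'
  have hvl : v ∈ l := (hmem v).2 hvS
  have hv'l : v' ∈ l := (hmem v').2 hv'S
  have hne : l ≠ [] := List.ne_nil_of_mem hvl
  have hcl : c ∉ l := fun h => branch_not_NB Γ hc (hNB c h)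
  have hc'l : c' ∉ l := fun h => branch_not_NB Γ hc' (hNB c' h)
  have hvend := touch_endpoint Γ hnd hch hNB hc hcv hvl
  have hv'end := touch_endpoint Γ hnd hch hNB hc' hc'v hv'l
  -- facts about the reversed list
  have hndR : l.reverse.Nodup := List.nodup_reverse.2 hnd
  have hchR : l.reverse.IsChain (fun a b => Γ.adj a b = true) := by
    rw [List.isChain_reverse]
    exact hch.imp (fun a b h => Γ.symm _ _ h)
  -- two-branches-at-one-endpoint exclusion
  have key : ∀ (l₀ : List ℕ), l₀.Nodup →
      l₀.IsChain (fun a b => Γ.adj a b = true) → (∀ x ∈ l₀, x ∈ Γ.NB) →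
      ∀ x x', l₀.head? = some x → l₀.head? = some x' →
      Γ.adj c x = true → Γ.adj c' x' = true → 2 ≤ l₀.length → False := by
    intro l₀ hnd₀ hch₀ hNB₀ x x' hh hh' hcx hc'x' hlen
    rw [hh] at hh'
    injection hh' with hxx'
    rw [← hxx'] at hc'x'
    obtain ⟨a, l₁, rfl⟩ : ∃ a l₁, l₀ = a :: l₁ := by
      cases l₀ with
      | nil => simp at hh
      | cons a l₁ => exact ⟨a, l₁, rfl⟩
    simp only [List.head?_cons, Option.some.injEq] at hh
    rw [← hh] at hcx hc'x'
    obtain ⟨b, l₂, rfl⟩ : ∃ b l₂, l₁ = b :: l₂ := by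
      cases l₁ with
      | nil => simp at hlen
      | cons b l₂ => exact ⟨b, l₂, rfl⟩
    have hab : Γ.adj a b = true := (List.isChain_cons_cons.1 hch₀).1
    have hbc : b ≠ c := fun h =>
      branch_not_NB Γ hc (hNB₀ c (h ▸ List.mem_cons_of_mem _ (List.mem_cons_self)))
    have hbc' : b ≠ c' := fun h =>
      branch_not_NB Γ hc' (hNB₀ c' (h ▸ List.mem_cons_of_mem _ (List.mem_cons_self)))
    have h3 : 3 ≤ Γ.deg a :=
      three_le_deg Γ hab (Γ.symm _ _ hcx) (Γ.symm _ _ hc'x') hbc hbc' hcc'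
    have := (hNB₀ a (List.mem_cons_self)).2
    omega
  by_cases hlen : l.length ≤ 1
  · -- single vertex: v = v'
    obtain ⟨z, rfl⟩ : ∃ z, l = [z] := by
      cases l with
      | nil => simp at hne
      | cons a l₁ =>
        cases l₁ with
        | nil => exact ⟨a, rfl⟩
        | cons b l₂ => simp at hlen
    have hv : v = z := by simpa using hvl
    have hv' : v' = z := by simpa using hv'l
    have hcz : Γ.adj c z = true := hv ▸ hcv
    have hc'z : Γ.adj c' z = true := hv' ▸ hc'v
    apply segTransferAux Γ [z] c c' hne hodd hnd hch hNB hcl hc'l hcc' _ _ w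
      (fun x hx => hw0 x ((hmem x).1 hx)) w' hw'
    · intro y hy; simp only [List.head?_cons, Option.mem_def, Option.some.injEq] at hy
      subst hy; exact hcz
    · intro y hy
      simp only [List.getLast?_singleton, Option.mem_def, Option.some.injEq] at hy
      subst hy; exact Γ.symm _ _ hc'z
  · push_neg at hlen
    have hlen2 : 2 ≤ l.length := hlen
    -- v and v' are endpoints; they cannot be the same endpoint
    have hmemR : ∀ x, x ∈ l.reverse ↔ x ∈ l := fun x => List.mem_reverse
    have hNBR : ∀ x ∈ l.reverse, x ∈ Γ.NB := fun x hx => hNB x (List.mem_reverse.1 hx)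
    rcases hvend with hvh | hvt
    · rcases hv'end with hv'h | hv't
      · exact absurd (key l hnd hch hNB v v' hvh hv'h hcv hc'v hlen2) (fun h => h)
      · -- c at head, c' at last: use l directly
        apply segTransferAux Γ l c c' hne hodd hnd hch hNB hcl hc'l hcc' _ _ w
          (fun x hx => hw0 x ((hmem x).1 hx)) w' hw'
        · intro y hy
          rw [hvh] at hy
          simp only [Option.mem_def, Option.some.injEq] at hy
          subst hy; exact hcv
        · intro y hy
          rw [hv't] at hy
          simp only [Option.mem_def, Option.some.injEq] at hy
          subst hy; exact Γ.symm _ _ hc'v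
    · rcases hv'end with hv'h | hv't
      · -- c at last, c' at head: use the reverse
        apply segTransferAux Γ l.reverse c c' (by simpa using hne) (by simpa using hodd)
          hndR hchR hNBR (fun h => hcl (List.mem_reverse.1 h))
          (fun h => hc'l (List.mem_reverse.1 h)) hcc' _ _ w
          (fun x hx => hw0 x ((hmem x).1 (List.mem_reverse.1 hx))) w' hw'
        · intro y hy
          rw [List.head?_reverse, hvt] at hy
          simp only [Option.mem_def, Option.some.injEq] at hy
          subst hy; exact hcv
        · intro y hy
          rw [List.getLast?_reverse, hv'h] at hy
          simp only [Option.mem_def, Option.some.injEq] at hy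
          subst hy; exact Γ.symm _ _ hc'v
      · -- both at last: contradiction on the reversed list
        exact absurd (key l.reverse hndR hchR hNBR v v'
          (by rw [List.head?_reverse]; exact hvt)
          (by rw [List.head?_reverse]; exact hv't) hcv hc'v (by simpa using hlen2)) (fun h => h)

end WGraph

namespace WGraph

theorem segDrainAux (Γ : WGraph) (l : List ℕ) (c : ℕ)
    (hne : l ≠ []) (hodd : Odd l.length) (hnd : l.Nodup)
    (hch : l.IsChain (fun a b => Γ.adj a b = true))
    (hNB : ∀ x ∈ l, x ∈ Γ.NB)
    (hcl : c ∉ l)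
    (hchd : ∀ y ∈ l.head?, Γ.adj c y = true)
    (hlast : ∀ y ∈ l.getLast?, Γ.deg y ≤ 1)
    (w : ℕ → ℤ) (hw0 : ∀ z ∈ l, w z = 0)
    (w' : ℕ → ℤ) (hw' : ∀ a, w' a = w a - (if a = c then 1 else 0)) :
    BirEq (Γ.mkW w) (Γ.mkW w') := by
  apply listDrain Γ l.length l le_rfl c w hodd _ _ _ hlast hw0 w' hw'
  · rw [List.isChain_cons]
    exact ⟨fun y hy => hchd y hy, hch⟩
  · rw [List.nodup_cons]
    exact ⟨hcl, hnd⟩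
  · intro z hz
    have := (hNB z hz).2
    omega

/-- Drop one unit of weight from branch `c` which touches an odd zero segment
containing a vertex of degree one. -/
theorem segDrain (Γ : WGraph) (S : Set ℕ) (hS : Γ.OddZeroSegment S)
    (c : ℕ) (hc : Γ.Branch c) (htc : Tch Γ c S)
    (u : ℕ) (huS : u ∈ S) (hdu : Γ.deg u = 1)
    (w : ℕ → ℤ) (hw0 : ∀ z ∈ S, w z = 0)
    (w' : ℕ → ℤ) (hw' : ∀ a, w' a = w a - (if a = c then 1 else 0)) :
    BirEq (Γ.mkW w) (Γ.mkW w') := by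
  obtain ⟨hSeg, l, ⟨hnd, hmem, hch⟩, hodd, -⟩ := hS
  have hNB : ∀ x ∈ l, x ∈ Γ.NB := fun x hx => seg_mem_NB Γ hSeg ((hmem x).1 hx)
  obtain ⟨v, hvS, hcv⟩ := htc
  have hvl : v ∈ l := (hmem v).2 hvS
  have hul : u ∈ l := (hmem u).2 huS
  have hne : l ≠ [] := List.ne_nil_of_mem hvl
  have hcl : c ∉ l := fun h => branch_not_NB Γ hc (hNB c h)
  have hvend := touch_endpoint Γ hnd hch hNB hc hcv hvl
  have hw0' : ∀ z ∈ l, w z = 0 := fun z hz => hw0 z ((hmem z).1 hz)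
  have hndR : l.reverse.Nodup := List.nodup_reverse.2 hnd
  have hchR : l.reverse.IsChain (fun a b => Γ.adj a b = true) := by
    rw [List.isChain_reverse]
    exact hch.imp (fun a b h => Γ.symm _ _ h)
  have hNBR : ∀ x ∈ l.reverse, x ∈ Γ.NB := fun x hx => hNB x (List.mem_reverse.1 hx)
  by_cases hlen : l.length ≤ 1
  · obtain ⟨z, rfl⟩ : ∃ z, l = [z] := by
      cases l with
      | nil => simp at hne
      | cons a l₁ =>
        cases l₁ with
        | nil => exact ⟨a, rfl⟩
        | cons b l₂ => simp at hlen
    have hv : v = z := by simpa using hvl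
    have hu : u = z := by simpa using hul
    have hcz : Γ.adj c z = true := hv ▸ hcv
    apply segDrainAux Γ [z] c hne hodd hnd hch hNB hcl _ _ w hw0' w' hw'
    · intro y hy; simp only [List.head?_cons, Option.mem_def, Option.some.injEq] at hy
      subst hy; exact hcz
    · intro y hy
      simp only [List.getLast?_singleton, Option.mem_def, Option.some.injEq] at hy
      subst hy
      exact le_of_eq (hu ▸ hdu)
  · push_neg at hlen
    have hlen2 : 2 ≤ l.length := hlen
    -- u is an endpoint
    have huend : l.head? = some u ∨ l.getLast? = some u := by
      by_contra h
      push_neg at h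
      obtain ⟨p, q, hpq, -, -, hup, huq⟩ := interior_neighbors Γ hnd hch hul h.1 h.2
      have := two_le_deg Γ hup huq hpq
      omega
    -- v ≠ u
    have hvu : v ≠ u := by
      intro h
      -- u would have both c and a list neighbour
      have key : ∀ (l₀ : List ℕ), l₀.Nodup →
          l₀.IsChain (fun a b => Γ.adj a b = true) → (∀ x ∈ l₀, x ∈ Γ.NB) →
          2 ≤ l₀.length → l₀.head? = some u → False := by
        intro l₀ hnd₀ hch₀ hNB₀ hl₀ hh
        obtain ⟨a, l₁, rfl⟩ : ∃ a l₁, l₀ = a :: l₁ := by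
          cases l₀ with
          | nil => simp at hh
          | cons a l₁ => exact ⟨a, l₁, rfl⟩
        obtain ⟨b, l₂, rfl⟩ : ∃ b l₂, l₁ = b :: l₂ := by
          cases l₁ with
          | nil => simp at hl₀
          | cons b l₂ => exact ⟨b, l₂, rfl⟩
        simp only [List.head?_cons, Option.some.injEq] at hh
        have hab : Γ.adj a b = true := (List.isChain_cons_cons.1 hch₀).1
        have hbc : b ≠ c := fun hh' =>
          branch_not_NB Γ hc (hNB₀ c (hh' ▸ List.mem_cons_of_mem _ (List.mem_cons_self)))
        have hcu : Γ.adj a c = true := by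
          rw [hh]
          exact Γ.symm _ _ (h ▸ hcv)
        have h2 := two_le_deg Γ hab hcu hbc
        rw [hh] at h2
        omega
      rcases huend with hh | hh
      · exact key l hnd hch hNB hlen2 hh
      · exact key l.reverse hndR hchR hNBR (by simpa using hlen2)
          (by rw [List.head?_reverse]; exact hh)
    rcases hvend with hvh | hvt
    · -- v at head, so u at last
      have hut : l.getLast? = some u := by
        rcases huend with hh | hh
        · rw [hvh] at hh; injection hh with h2; exact absurd h2 hvu
        · exact hh
      apply segDrainAux Γ l c hne hodd hnd hch hNB hcl _ _ w hw0' w' hw'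
      · intro y hy
        rw [hvh] at hy
        simp only [Option.mem_def, Option.some.injEq] at hy
        subst hy; exact hcv
      · intro y hy
        rw [hut] at hy
        simp only [Option.mem_def, Option.some.injEq] at hy
        subst hy; exact le_of_eq hdu
    · -- v at last, so u at head: use the reverse
      have huh : l.head? = some u := by
        rcases huend with hh | hh
        · exact hh
        · rw [hvt] at hh; injection hh with h2; exact absurd h2 hvu
      apply segDrainAux Γ l.reverse c (by simpa using hne) (by simpa using hodd)
        hndR hchR hNBR (fun hh => hcl (List.mem_reverse.1 hh)) _ _ w
        (fun z hz => hw0' z (List.mem_reverse.1 hz)) w' hw'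
      · intro y hy
        rw [List.head?_reverse, hvt] at hy
        simp only [Option.mem_def, Option.some.injEq] at hy
        subst hy; exact hcv
      · intro y hy
        rw [List.getLast?_reverse, huh] at hy
        simp only [Option.mem_def, Option.some.injEq] at hy
        subst hy; exact le_of_eq hdu

end WGraph

namespace WGraph

/-- Two branch points connected through a common odd zero segment. -/
def Hrel (Γ : WGraph) (c c' : ℕ) : Prop :=
  Γ.Branch c ∧ Γ.Branch c' ∧ ∃ S, Γ.OddZeroSegment S ∧ Tch Γ c S ∧ Tch Γ c' S

lemma adj0_symm (Γ : WGraph) {a b : ℕ} (h : Γ.Adj0 a b) : Γ.Adj0 b a :=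
  ⟨Γ.symm _ _ h.1, h.2.2.1, h.2.1, fun ⟨p, q⟩ => h.2.2.2 ⟨q, p⟩⟩

lemma comp0_symm (Γ : WGraph) {u v : ℕ} (h : u ∈ Γ.Comp0 v) : v ∈ Γ.Comp0 u :=
  (@Relation.ReflTransGen.symmetric _ _ ⟨fun _ _ hh => adj0_symm Γ hh⟩).symm _ _ h

lemma comp0_trans (Γ : WGraph) {u v t : ℕ} (h : u ∈ Γ.Comp0 v) (h' : t ∈ Γ.Comp0 u) :
    t ∈ Γ.Comp0 v :=
  Relation.ReflTransGen.trans h h'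

lemma comp0_eq (Γ : WGraph) {u v : ℕ} (h : u ∈ Γ.Comp0 v) : Γ.Comp0 u = Γ.Comp0 v :=
  Set.ext fun t => ⟨fun ht => comp0_trans Γ h ht,
    fun ht => comp0_trans Γ (comp0_symm Γ h) ht⟩

lemma mem_gamma0V_of_seg (Γ : WGraph) {S : Set ℕ} (hS : Γ.OddZeroSegment S)
    {v : ℕ} (hv : v ∈ S) : v ∈ Γ.Gamma0V :=
  Or.inr ⟨S, hS, hv⟩

/-- Any vertex of the component of a branch point `b` in `Γ₀` is either a branch
point `H`-connected to `b`, or lies on an odd zero segment touched by a branch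
point `H`-connected to `b`. -/
lemma comp0_structure (Γ : WGraph) {b : ℕ} (hb : Γ.Branch b) :
    ∀ u ∈ Γ.Comp0 b,
    (Γ.Branch u ∧ Relation.ReflTransGen (Hrel Γ) b u) ∨
    (∃ S, Γ.OddZeroSegment S ∧ u ∈ S ∧ ∃ c, Γ.Branch c ∧
      Relation.ReflTransGen (Hrel Γ) b c ∧ Tch Γ c S) := by
  intro u hu
  induction hu with
  | refl => exact Or.inl ⟨hb, Relation.ReflTransGen.refl⟩
  | @tail mid u h1 h2 ih =>
    obtain ⟨hadj, hmid0, hu0, hnbb⟩ := h2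
    rcases ih with ⟨hmidb, hrtg⟩ | ⟨S, hS, hmidS, c, hcB, hrtg, htch⟩
    · have huNB : ¬ Γ.Branch u := fun h => hnbb ⟨hmidb, h⟩
      rcases hu0 with h | ⟨S, hS, huS⟩
      · exact absurd h huNB
      · exact Or.inr ⟨S, hS, huS, mid, hmidb, hrtg, ⟨u, huS, hadj⟩⟩
    · by_cases hub : Γ.Branch u
      · left
        refine ⟨hub, hrtg.tail ?_⟩
        exact ⟨hcB, hub, S, hS, htch, ⟨mid, hmidS, Γ.symm _ _ hadj⟩⟩
      · right
        have huNB : u ∈ Γ.NB := by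
          rcases hu0 with h | ⟨S', hS', huS'⟩
          · exact absurd h hub
          · exact seg_mem_NB Γ hS'.1 huS'
        have huS : u ∈ S := seg_closed Γ hS.1 hmidS huNB hadj
        exact ⟨S, hS, huS, c, hcB, hrtg, htch⟩

lemma seg_rtg_adj0 (Γ : WGraph) {S : Set ℕ} (hS : Γ.OddZeroSegment S)
    {a b : ℕ} (ha : a ∈ S) (hb : b ∈ S) :
    Relation.ReflTransGen Γ.Adj0 a b := by
  have key : ∀ x ∈ S, Relation.ReflTransGen Γ.Adj0 x a →
      ∀ y ∈ S, Relation.ReflTransGen Γ.Adj0 x y → True := fun _ _ _ _ _ _ => trivial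
  -- show everything in S is Adj0-reachable from the base point of the segment
  obtain ⟨v0, hv0, hSeq⟩ := hS.1
  have main : ∀ x, x ∈ S → Relation.ReflTransGen Γ.Adj0 v0 x := by
    intro x hx
    have hx' : Relation.ReflTransGen
        (fun a b => a ∈ Γ.NB ∧ b ∈ Γ.NB ∧ Γ.adj a b = true) v0 x := by
      rw [hSeq] at hx; exact hx
    clear hx
    induction hx' with
    | refl => exact Relation.ReflTransGen.refl
    | @tail mid x h1 h2 ih =>
      refine ih.tail ?_
      have hmidS : mid ∈ S := by rw [hSeq]; exact h1
      have hxS : x ∈ S := by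
        rw [hSeq]; exact h1.tail h2
      exact ⟨h2.2.2, mem_gamma0V_of_seg Γ hS hmidS, mem_gamma0V_of_seg Γ hS hxS,
        fun hp => branch_not_NB Γ hp.1 h2.1⟩
  exact Relation.ReflTransGen.trans
    ((@Relation.ReflTransGen.symmetric _ _ ⟨fun _ _ hh => adj0_symm Γ hh⟩).symm _ _ (main a ha))
    (main b hb)

lemma hrel_mem_comp0 (Γ : WGraph) {c c' : ℕ} (h : Hrel Γ c c') : c' ∈ Γ.Comp0 c := by
  obtain ⟨hc, hc', S, hS, ⟨v, hvS, hcv⟩, ⟨v', hv'S, hc'v⟩⟩ := h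
  have h1 : Relation.ReflTransGen Γ.Adj0 c v :=
    Relation.ReflTransGen.single ⟨hcv, Or.inl hc, mem_gamma0V_of_seg Γ hS hvS,
      fun hp => branch_not_NB Γ hp.2 (seg_mem_NB Γ hS.1 hvS)⟩
  have h2 : Relation.ReflTransGen Γ.Adj0 v v' := seg_rtg_adj0 Γ hS hvS hv'S
  have h3 : Relation.ReflTransGen Γ.Adj0 v' c' := by
    refine Relation.ReflTransGen.single ?_
    exact adj0_symm Γ ⟨hc'v, Or.inl hc', mem_gamma0V_of_seg Γ hS hv'S,
      fun hp => branch_not_NB Γ hp.2 (seg_mem_NB Γ hS.1 hv'S)⟩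
  exact (h1.trans h2).trans h3

lemma hrtg_mem_comp0 (Γ : WGraph) {c c' : ℕ}
    (h : Relation.ReflTransGen (Hrel Γ) c c') : c' ∈ Γ.Comp0 c := by
  induction h with
  | refl => exact Relation.ReflTransGen.refl
  | tail h1 h2 ih => exact comp0_trans Γ ih (hrel_mem_comp0 Γ h2)

lemma seg_wt_zero (Γ : WGraph) {S : Set ℕ} (hS : Γ.OddZeroSegment S)
    {z : ℕ} (hz : z ∈ S) : Γ.wt z = 0 := by
  obtain ⟨-, l, ⟨-, hmem, -⟩, -, hzero⟩ := hS
  exact hzero z ((hmem z).2 hz)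

/-- Transfer one unit of weight from `c` to `c'` along a chain of `Hrel` steps. -/
theorem chainTransfer (Γ : WGraph) {c c' : ℕ} (hc : Γ.Branch c)
    (h : Relation.ReflTransGen (Hrel Γ) c c') :
    ∀ (w : ℕ → ℤ), (∀ z, z ∈ Γ.NB → w z = Γ.wt z) → ∀ w',
    (∀ a, w' a = w a - (if a = c then 1 else 0) + (if a = c' then 1 else 0)) →
    BirEq (Γ.mkW w) (Γ.mkW w') := by
  induction h with
  | refl =>
    intro w hw w' hw'
    have : w' = w := funext fun a => by rw [hw' a]; ring
    rw [this]
    exact Relation.EqvGen.refl _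
  | @tail m c' h1 h2 ih =>
    intro w hw w' hw'
    set w1 : ℕ → ℤ := fun a => w a - (if a = c then 1 else 0) + (if a = m then 1 else 0)
      with hw1def
    have step1 : BirEq (Γ.mkW w) (Γ.mkW w1) := ih w hw w1 (fun a => rfl)
    obtain ⟨hmB, hc'B, S, hS, htm, htc'⟩ := h2
    by_cases hmc' : m = c'
    · have : w' = w1 := funext fun a => by rw [hw' a, hw1def, hmc']
      rw [this]
      exact step1
    · have step2 : BirEq (Γ.mkW w1) (Γ.mkW w') := by
        apply segTransfer Γ S hS m c' hmB hc'B hmc' htm htc' w1 _ w'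
        · intro a
          rw [hw' a, hw1def]
          ring
        · intro z hz
          have hzNB : z ∈ Γ.NB := seg_mem_NB Γ hS.1 hz
          have h1 : z ≠ c := fun hh => branch_not_NB Γ (hh ▸ hc) hzNB
          have h2 : z ≠ m := fun hh => branch_not_NB Γ (hh ▸ hmB) hzNB
          rw [hw1def]
          simp only [h1, h2, if_false]
          rw [hw z hzNB, seg_wt_zero Γ hS hz]
          ring
      exact Relation.EqvGen.trans _ _ _ step1 step2

end WGraph

namespace WGraph

/-- The component of `v` in `Γ₀` contains an end-vertex. -/
def isEnd (Γ : WGraph) (v : ℕ) : Prop := ∃ u ∈ Γ.Comp0 v, Γ.deg u = 1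

/-- The branch points in the component of `v` in `Γ₀`. -/
noncomputable def Fc (Γ : WGraph) (v : ℕ) : Finset ℕ :=
  Γ.verts.filter (fun c => Γ.Branch c ∧ c ∈ Γ.Comp0 v)

/-- The branch points of `Γ`. -/
noncomputable def Bset (Γ : WGraph) : Finset ℕ := Γ.verts.filter (fun b => Γ.Branch b)

/-- A canonical choice from a finset. -/
noncomputable def pick (s : Finset ℕ) : ℕ := if h : s.Nonempty then s.min' h else 0

lemma pick_mem {s : Finset ℕ} (h : s.Nonempty) : pick s ∈ s := by
  rw [pick, dif_pos h]
  exact Finset.min'_mem s h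

/-- The normalised weight function. -/
noncomputable def wstar (Γ : WGraph) : ℕ → ℤ := fun v =>
  if Γ.Branch v then
    (if isEnd Γ v then 0
     else if v = pick (Fc Γ v) then ∑ c ∈ Fc Γ v, Γ.wt c
     else 0)
  else Γ.wt v

lemma mem_Fc (Γ : WGraph) {c v : ℕ} :
    c ∈ Fc Γ v ↔ Γ.Branch c ∧ c ∈ Γ.Comp0 v := by
  rw [Fc, Finset.mem_filter]
  exact ⟨fun h => h.2, fun h => ⟨h.1.1, h⟩⟩

lemma Fc_self (Γ : WGraph) {v : ℕ} (hv : Γ.Branch v) : v ∈ Fc Γ v :=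
  (mem_Fc Γ).2 ⟨hv, Relation.ReflTransGen.refl⟩

lemma Fc_nonempty (Γ : WGraph) {v : ℕ} (hv : Γ.Branch v) : (Fc Γ v).Nonempty :=
  ⟨v, Fc_self Γ hv⟩

lemma Fc_eq (Γ : WGraph) {u v : ℕ} (h : u ∈ Γ.Comp0 v) : Fc Γ u = Fc Γ v := by
  unfold Fc
  apply Finset.filter_congr
  intro c _
  rw [comp0_eq Γ h]

lemma isEnd_congr (Γ : WGraph) {u v : ℕ} (h : u ∈ Γ.Comp0 v) :
    isEnd Γ u ↔ isEnd Γ v := by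
  unfold isEnd
  rw [comp0_eq Γ h]

lemma wstar_nonbranch (Γ : WGraph) {v : ℕ} (hv : ¬ Γ.Branch v) :
    wstar Γ v = Γ.wt v := by
  rw [wstar, if_neg hv]

lemma wstar_end (Γ : WGraph) {v : ℕ} (hv : Γ.Branch v) (he : isEnd Γ v) :
    wstar Γ v = 0 := by
  rw [wstar, if_pos hv, if_pos he]

lemma wstar_notend (Γ : WGraph) {v : ℕ} (hv : Γ.Branch v) (he : ¬ isEnd Γ v) :
    wstar Γ v = if v = pick (Fc Γ v) then ∑ c ∈ Fc Γ v, Γ.wt c else 0 := by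
  rw [wstar, if_pos hv, if_neg he]

lemma sum_wstar (Γ : WGraph) {b : ℕ} (hb : Γ.Branch b) (hne : ¬ isEnd Γ b) :
    ∑ c ∈ Fc Γ b, wstar Γ c = ∑ c ∈ Fc Γ b, Γ.wt c := by
  have key : ∀ c ∈ Fc Γ b,
      wstar Γ c = if c = pick (Fc Γ b) then ∑ x ∈ Fc Γ b, Γ.wt x else 0 := by
    intro c hc
    obtain ⟨hcB, hcC⟩ := (mem_Fc Γ).1 hc
    have hF : Fc Γ c = Fc Γ b := Fc_eq Γ hcC
    have hE : ¬ isEnd Γ c := fun h => hne ((isEnd_congr Γ hcC).1 h)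
    rw [wstar_notend Γ hcB hE, hF]
  rw [Finset.sum_congr rfl key, Finset.sum_ite_eq' (Fc Γ b) (pick (Fc Γ b))
    (fun _ => ∑ x ∈ Fc Γ b, Γ.wt x), if_pos (pick_mem (Fc_nonempty Γ hb))]

lemma mem_Bset (Γ : WGraph) {b : ℕ} : b ∈ Bset Γ ↔ Γ.Branch b := by
  rw [Bset, Finset.mem_filter]
  exact ⟨fun h => h.2, fun h => ⟨h.1, h⟩⟩

/-- Main reachability induction: from any admissible weight function we can reach
`wstar` by birational moves. -/
theorem reach (Γ : WGraph) (n : ℕ) :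
    ∀ (w : ℕ → ℤ),
    (∀ z, ¬ Γ.Branch z → w z = Γ.wt z) →
    (∀ b, Γ.Branch b → ¬ isEnd Γ b → ∑ c ∈ Fc Γ b, w c = ∑ c ∈ Fc Γ b, Γ.wt c) →
    (∑ b ∈ Bset Γ, (w b - wstar Γ b).natAbs) ≤ n →
    BirEq (Γ.mkW w) (Γ.mkW (wstar Γ)) := by
  induction n with
  | zero =>
    intro w hfix hsum hm
    have hz : ∀ b ∈ Bset Γ, (w b - wstar Γ b).natAbs = 0 := by
      intro b hb
      have := Finset.sum_eq_zero_iff.1 (Nat.le_zero.1 hm) b hb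
      exact this
    have : w = wstar Γ := by
      funext v
      by_cases hv : Γ.Branch v
      · have := hz v ((mem_Bset Γ).2 hv)
        omega
      · rw [hfix v hv, wstar_nonbranch Γ hv]
    rw [this]
    exact Relation.EqvGen.refl _
  | succ n ih =>
    intro w hfix hsum hm
    by_cases h0 : ∑ b ∈ Bset Γ, (w b - wstar Γ b).natAbs = 0
    · have hz : ∀ b ∈ Bset Γ, (w b - wstar Γ b).natAbs = 0 :=
        fun b hb => Finset.sum_eq_zero_iff.1 h0 b hb
      have : w = wstar Γ := by
        funext v
        by_cases hv : Γ.Branch v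
        · have := hz v ((mem_Bset Γ).2 hv)
          omega
        · rw [hfix v hv, wstar_nonbranch Γ hv]
      rw [this]
      exact Relation.EqvGen.refl _
    · -- there is a deviating branch point
      obtain ⟨b, hbB, hbne⟩ : ∃ b ∈ Bset Γ, w b ≠ wstar Γ b := by
        by_contra h
        push_neg at h
        exact h0 (Finset.sum_eq_zero (fun b hb => by rw [h b hb]; simp))
      have hb : Γ.Branch b := (mem_Bset Γ).1 hbB
      by_cases hEnd : isEnd Γ b
      · -- end component: adjust w b by one towards 0
        obtain ⟨u, huC, hdu⟩ := hEnd
        have hcs := comp0_structure Γ hb u huC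
        have hubr : ¬ Γ.Branch u := by
          intro h
          have := h.2
          rw [hdu] at this
          omega
        obtain ⟨S, hS, huS, ce, hceB, hrtg, htce⟩ : ∃ S, Γ.OddZeroSegment S ∧ u ∈ S ∧
            ∃ c, Γ.Branch c ∧ Relation.ReflTransGen (Hrel Γ) b c ∧ Tch Γ c S := by
          rcases hcs with ⟨h, -⟩ | ⟨S, hS, huS, c, h1, h2, h3⟩
          · exact absurd h hubr
          · exact ⟨S, hS, huS, c, h1, h2, h3⟩
        have hwse : wstar Γ b = 0 := wstar_end Γ hb ⟨u, huC, hdu⟩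
        -- single decrement step (for arbitrary admissible start)
        have endStep : ∀ (w0 : ℕ → ℤ), (∀ z, ¬ Γ.Branch z → w0 z = Γ.wt z) →
            ∀ w2, (∀ a, w2 a = w0 a - (if a = b then 1 else 0)) →
            BirEq (Γ.mkW w0) (Γ.mkW w2) := by
          intro w0 hfix0 w2 hw2
          set w1 : ℕ → ℤ :=
            fun a => w0 a - (if a = b then 1 else 0) + (if a = ce then 1 else 0) with hw1def
          have s1 : BirEq (Γ.mkW w0) (Γ.mkW w1) :=
            chainTransfer Γ hb hrtg w0
              (fun z hz => hfix0 z (fun hbr => branch_not_NB Γ hbr hz)) w1 (fun a => rfl)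
          have s2 : BirEq (Γ.mkW w1) (Γ.mkW w2) := by
            apply segDrain Γ S hS ce hceB htce u huS hdu w1 _ w2
            · intro a
              rw [hw2 a, hw1def]
              ring
            · intro z hz
              have hzNB : z ∈ Γ.NB := seg_mem_NB Γ hS.1 hz
              have h1 : z ≠ b := fun hh => branch_not_NB Γ (hh ▸ hb) hzNB
              have h2 : z ≠ ce := fun hh => branch_not_NB Γ (hh ▸ hceB) hzNB
              rw [hw1def]
              simp only [h1, h2, if_false]
              rw [hfix0 z (fun hbr => branch_not_NB Γ hbr hzNB), seg_wt_zero Γ hS hz]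
              ring
          exact Relation.EqvGen.trans _ _ _ s1 s2
        -- next weight function, one unit closer to 0 at b
        by_cases hpos : 0 < w b
        · set w2 : ℕ → ℤ := fun a => w a - (if a = b then 1 else 0) with hw2def
          have step : BirEq (Γ.mkW w) (Γ.mkW w2) := endStep w hfix w2 (fun a => rfl)
          have hrec : BirEq (Γ.mkW w2) (Γ.mkW (wstar Γ)) := by
            apply ih w2
            · intro z hz
              have hzb : z ≠ b := fun hh => hz (hh ▸ hb)
              rw [hw2def]
              simp only [hzb, if_false]
              rw [hfix z hz]
              ring
            · intro b'' hb'' hne''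
              have hbnot : b ∉ Fc Γ b'' := by
                intro hmem
                obtain ⟨-, hbC⟩ := (mem_Fc Γ).1 hmem
                exact hne'' ((isEnd_congr Γ hbC).1 ⟨u, huC, hdu⟩)
              rw [← hsum b'' hb'' hne'']
              apply Finset.sum_congr rfl
              intro c hc
              have : c ≠ b := fun hh => hbnot (hh ▸ hc)
              rw [hw2def]
              simp [this]
            · -- measure decreases
              have hsplit : ∑ c ∈ Bset Γ, (w c - wstar Γ c).natAbs
                  = (w b - wstar Γ b).natAbs
                    + ∑ c ∈ (Bset Γ).erase b, (w c - wstar Γ c).natAbs :=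
                (Finset.add_sum_erase _ _ hbB).symm
              have hsplit2 : ∑ c ∈ Bset Γ, (w2 c - wstar Γ c).natAbs
                  = (w2 b - wstar Γ b).natAbs
                    + ∑ c ∈ (Bset Γ).erase b, (w2 c - wstar Γ c).natAbs :=
                (Finset.add_sum_erase _ _ hbB).symm
              have hcongr : ∑ c ∈ (Bset Γ).erase b, (w2 c - wstar Γ c).natAbs =
                  ∑ c ∈ (Bset Γ).erase b, (w c - wstar Γ c).natAbs := by
                apply Finset.sum_congr rfl
                intro c hc
                have hcb : c ≠ b := Finset.ne_of_mem_erase hc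
                rw [hw2def]
                simp [hcb]
              have h1 : w2 b = w b - 1 := by rw [hw2def]; simp
              have h0 : wstar Γ b = 0 := hwse
              omega
          exact Relation.EqvGen.trans _ _ _ step hrec
        · have hneg : w b < 0 := by
            rw [hwse] at hbne
            omega
          set w2 : ℕ → ℤ := fun a => w a + (if a = b then 1 else 0) with hw2def
          have step : BirEq (Γ.mkW w) (Γ.mkW w2) := by
            have : BirEq (Γ.mkW w2) (Γ.mkW w) := by
              apply endStep w2 _ w
              · intro a
                rw [hw2def]
                ring
              · intro z hz
                have hzb : z ≠ b := fun hh => hz (hh ▸ hb)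
                rw [hw2def]
                simp only [hzb, if_false]
                rw [hfix z hz]
                ring
            exact Relation.EqvGen.symm _ _ this
          have hrec : BirEq (Γ.mkW w2) (Γ.mkW (wstar Γ)) := by
            apply ih w2
            · intro z hz
              have hzb : z ≠ b := fun hh => hz (hh ▸ hb)
              rw [hw2def]
              simp only [hzb, if_false]
              rw [hfix z hz]
              ring
            · intro b'' hb'' hne''
              have hbnot : b ∉ Fc Γ b'' := by
                intro hmem
                obtain ⟨-, hbC⟩ := (mem_Fc Γ).1 hmem
                exact hne'' ((isEnd_congr Γ hbC).1 ⟨u, huC, hdu⟩)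
              rw [← hsum b'' hb'' hne'']
              apply Finset.sum_congr rfl
              intro c hc
              have : c ≠ b := fun hh => hbnot (hh ▸ hc)
              rw [hw2def]
              simp [this]
            · have hsplit : ∑ c ∈ Bset Γ, (w c - wstar Γ c).natAbs
                  = (w b - wstar Γ b).natAbs
                    + ∑ c ∈ (Bset Γ).erase b, (w c - wstar Γ c).natAbs :=
                (Finset.add_sum_erase _ _ hbB).symm
              have hsplit2 : ∑ c ∈ Bset Γ, (w2 c - wstar Γ c).natAbs
                  = (w2 b - wstar Γ b).natAbs
                    + ∑ c ∈ (Bset Γ).erase b, (w2 c - wstar Γ c).natAbs :=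
                (Finset.add_sum_erase _ _ hbB).symm
              have hcongr : ∑ c ∈ (Bset Γ).erase b, (w2 c - wstar Γ c).natAbs =
                  ∑ c ∈ (Bset Γ).erase b, (w c - wstar Γ c).natAbs := by
                apply Finset.sum_congr rfl
                intro c hc
                have hcb : c ≠ b := Finset.ne_of_mem_erase hc
                rw [hw2def]
                simp [hcb]
              have h1 : w2 b = w b + 1 := by rw [hw2def]; simp
              have h0 : wstar Γ b = 0 := hwse
              omega
          exact Relation.EqvGen.trans _ _ _ step hrec
      · -- non-end component: transfer between two deviating branch points
        have hsumF : ∑ c ∈ Fc Γ b, (w c - wstar Γ c) = 0 := by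
          rw [Finset.sum_sub_distrib, hsum b hb hEnd, sum_wstar Γ hb hEnd]
          ring
        have hbF : b ∈ Fc Γ b := Fc_self Γ hb
        -- find the two endpoints p (positive deviation) and q (negative deviation)
        obtain ⟨p, q, hpF, hqF, hppos, hqneg⟩ :
            ∃ p q, p ∈ Fc Γ b ∧ q ∈ Fc Γ b ∧ 0 < w p - wstar Γ p ∧ w q - wstar Γ q < 0 := by
          rcases lt_or_gt_of_ne (sub_ne_zero.2 hbne) with hlt | hgt
          · -- w b < wstar b : b is the negative one, find a positive one
            have : ∃ p ∈ Fc Γ b, 0 < w p - wstar Γ p := by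
              by_contra h
              push_neg at h
              have h1 : ∑ c ∈ (Fc Γ b).erase b, (w c - wstar Γ c) ≤ 0 :=
                Finset.sum_nonpos (fun c hc => h c (Finset.mem_of_mem_erase hc))
              have h2 : ∑ c ∈ Fc Γ b, (w c - wstar Γ c)
                  = (w b - wstar Γ b) + ∑ c ∈ (Fc Γ b).erase b, (w c - wstar Γ c) :=
                (Finset.add_sum_erase _ _ hbF).symm
              omega
            obtain ⟨p, hpF, hp⟩ := this
            exact ⟨p, b, hpF, hbF, hp, by omega⟩
          · have : ∃ q ∈ Fc Γ b, w q - wstar Γ q < 0 := by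
              by_contra h
              push_neg at h
              have h1 : 0 ≤ ∑ c ∈ (Fc Γ b).erase b, (w c - wstar Γ c) :=
                Finset.sum_nonneg (fun c hc => h c (Finset.mem_of_mem_erase hc))
              have h2 : ∑ c ∈ Fc Γ b, (w c - wstar Γ c)
                  = (w b - wstar Γ b) + ∑ c ∈ (Fc Γ b).erase b, (w c - wstar Γ c) :=
                (Finset.add_sum_erase _ _ hbF).symm
              omega
            obtain ⟨q, hqF, hq⟩ := this
            exact ⟨b, q, hbF, hqF, by omega, hq⟩
        obtain ⟨hpB, hpC⟩ := (mem_Fc Γ).1 hpF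
        obtain ⟨hqB, hqC⟩ := (mem_Fc Γ).1 hqF
        have hpq : p ≠ q := by
          intro h
          rw [h] at hppos
          omega
        have hqCp : q ∈ Γ.Comp0 p := comp0_trans Γ (comp0_symm Γ hpC) hqC
        have hrtg : Relation.ReflTransGen (Hrel Γ) p q := by
          rcases comp0_structure Γ hpB q hqCp with ⟨-, h⟩ | ⟨S', hS', hqS', -⟩
          · exact h
          · exact absurd (seg_mem_NB Γ hS'.1 hqS') (branch_not_NB Γ hqB)
        set w2 : ℕ → ℤ :=
          fun a => w a - (if a = p then 1 else 0) + (if a = q then 1 else 0) with hw2def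
        have step : BirEq (Γ.mkW w) (Γ.mkW w2) :=
          chainTransfer Γ hpB hrtg w
            (fun z hz => hfix z (fun hbr => branch_not_NB Γ hbr hz)) w2 (fun a => rfl)
        have hrec : BirEq (Γ.mkW w2) (Γ.mkW (wstar Γ)) := by
          apply ih w2
          · intro z hz
            have hzp : z ≠ p := fun hh => hz (hh ▸ hpB)
            have hzq : z ≠ q := fun hh => hz (hh ▸ hqB)
            rw [hw2def]
            simp only [hzp, hzq, if_false]
            rw [hfix z hz]
            ring
          · intro b'' hb'' hne''
            have hiff : p ∈ Fc Γ b'' ↔ q ∈ Fc Γ b'' := by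
              constructor
              · intro h
                obtain ⟨-, hpC''⟩ := (mem_Fc Γ).1 h
                exact (mem_Fc Γ).2 ⟨hqB, comp0_trans Γ hpC'' hqCp⟩
              · intro h
                obtain ⟨-, hqC''⟩ := (mem_Fc Γ).1 h
                exact (mem_Fc Γ).2 ⟨hpB,
                  comp0_trans Γ hqC'' (comp0_symm Γ hqCp)⟩
            rw [← hsum b'' hb'' hne'']
            rw [hw2def]
            rw [Finset.sum_add_distrib, Finset.sum_sub_distrib]
            rw [Finset.sum_ite_eq' (Fc Γ b'') p (fun _ => (1 : ℤ)),
              Finset.sum_ite_eq' (Fc Γ b'') q (fun _ => (1 : ℤ))]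
            by_cases hpmem : p ∈ Fc Γ b''
            · rw [if_pos hpmem, if_pos (hiff.1 hpmem)]
              ring
            · rw [if_neg hpmem, if_neg (fun h => hpmem (hiff.2 h))]
              ring
          · -- measure decreases by two
            have hpBs : p ∈ Bset Γ := (mem_Bset Γ).2 hpB
            have hqBs : q ∈ (Bset Γ).erase p :=
              Finset.mem_erase.2 ⟨fun h => hpq h.symm, (mem_Bset Γ).2 hqB⟩
            have hsplit : ∑ c ∈ Bset Γ, (w c - wstar Γ c).natAbs
                = (w p - wstar Γ p).natAbs
                  + ∑ c ∈ (Bset Γ).erase p, (w c - wstar Γ c).natAbs :=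
              (Finset.add_sum_erase _ _ hpBs).symm
            have hsplit2 : ∑ c ∈ (Bset Γ).erase p, (w c - wstar Γ c).natAbs
                = (w q - wstar Γ q).natAbs
                  + ∑ c ∈ ((Bset Γ).erase p).erase q, (w c - wstar Γ c).natAbs :=
              (Finset.add_sum_erase _ _ hqBs).symm
            have hsplit3 : ∑ c ∈ Bset Γ, (w2 c - wstar Γ c).natAbs
                = (w2 p - wstar Γ p).natAbs
                  + ∑ c ∈ (Bset Γ).erase p, (w2 c - wstar Γ c).natAbs :=
              (Finset.add_sum_erase _ _ hpBs).symm
            have hsplit4 : ∑ c ∈ (Bset Γ).erase p, (w2 c - wstar Γ c).natAbs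
                = (w2 q - wstar Γ q).natAbs
                  + ∑ c ∈ ((Bset Γ).erase p).erase q, (w2 c - wstar Γ c).natAbs :=
              (Finset.add_sum_erase _ _ hqBs).symm
            have hcongr : ∑ c ∈ ((Bset Γ).erase p).erase q, (w2 c - wstar Γ c).natAbs =
                ∑ c ∈ ((Bset Γ).erase p).erase q, (w c - wstar Γ c).natAbs := by
              apply Finset.sum_congr rfl
              intro c hc
              have hcq : c ≠ q := Finset.ne_of_mem_erase hc
              have hcp : c ≠ p := Finset.ne_of_mem_erase (Finset.mem_of_mem_erase hc)
              rw [hw2def]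
              simp [hcp, hcq]
            have hp1 : w2 p = w p - 1 := by rw [hw2def]; simp [hpq]
            have hqp : q ≠ p := fun h => hpq h.symm
            have hq1 : w2 q = w q + 1 := by
              rw [hw2def]
              simp [hqp]
            omega
        exact Relation.EqvGen.trans _ _ _ step hrec

end WGraph

open WGraph in
/-- Corollary 3.33′, normalization of branch weights: every
non-circular standard weighted graph `Γ` is birationally equivalent to a standard
weighted graph `Γ'` with the same underlying graph and the same weight sequences on
all linear segments, such that for every connected component `C` of `Γ₀`: if `C`
contains an end-vertex of `Γ` then every branching point in `C` has weight `0` in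
`Γ'`, and otherwise every branching point in `C` has weight `0` in `Γ'` with one
exception, whose `Γ'`-weight is the sum of the `Γ`-weights of the branching points
lying in `C`. -/
theorem standard_birEq_branch_weights_normalized
    (Γ : WGraph) (hΓ : IsStandard Γ) (hΓc : ¬ Γ.IsCircular) :
    ∃ Γ' : WGraph, IsStandard Γ' ∧ BirEq Γ Γ' ∧
      Γ'.verts = Γ.verts ∧ (∀ a b, Γ'.adj a b = Γ.adj a b) ∧
      (∀ S : Set ℕ, Γ.IsSegment S → ∀ v ∈ S, Γ'.wt v = Γ.wt v) ∧
      (∀ v ∈ Γ.Gamma0V,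
        ((∃ u ∈ Γ.Comp0 v, Γ.deg u = 1) →
          ∀ b ∈ Γ.Comp0 v, Γ.Branch b → Γ'.wt b = 0) ∧
        ((∀ u ∈ Γ.Comp0 v, Γ.deg u ≠ 1) → (∃ b, Γ.Branch b ∧ b ∈ Γ.Comp0 v) →
          ∃ b0, Γ.Branch b0 ∧ b0 ∈ Γ.Comp0 v ∧
            Γ'.wt b0 = ∑ b ∈ Γ.verts.filter (fun b => Γ.Branch b ∧ b ∈ Γ.Comp0 v), Γ.wt b ∧
            ∀ b ∈ Γ.Comp0 v, Γ.Branch b → b ≠ b0 → Γ'.wt b = 0)) := by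
  refine ⟨Γ.mkW (wstar Γ), ?_, ?_, rfl, fun a b => rfl, ?_, ?_⟩
  · -- standardness
    refine ⟨hΓ.1, ?_⟩
    intro S hS
    have hS' : Γ.IsSegment S := hS
    obtain ⟨l, hlst, hstd, hhead⟩ := hΓ.2 S hS'
    refine ⟨l, hlst, ?_, hhead⟩
    have hmap : l.map (wstar Γ) = l.map Γ.wt := by
      apply List.map_congr_left
      intro x hx
      have hxS : x ∈ S := (hlst.2.1 x).1 hx
      have hxNB : x ∈ Γ.NB := seg_mem_NB Γ hS' hxS
      exact wstar_nonbranch Γ (fun hbr => branch_not_NB Γ hbr hxNB)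
    show StdSeq (l.map (wstar Γ))
    rw [hmap]
    exact hstd
  · -- birational equivalence
    have := reach Γ (∑ b ∈ Bset Γ, (Γ.wt b - wstar Γ b).natAbs) Γ.wt
      (fun z _ => rfl) (fun b _ _ => rfl) le_rfl
    rwa [mkW_self] at this
  · -- weights on segments are unchanged
    intro S hSeg v hv
    exact wstar_nonbranch Γ (fun hbr => branch_not_NB Γ hbr (seg_mem_NB Γ hSeg hv))
  · -- the branch-weight normalisation
    intro v hv
    constructor
    · intro hend b hbC hbB
      exact wstar_end Γ hbB ((isEnd_congr Γ hbC).2 hend)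
    · intro hnend hex
      obtain ⟨b, hbB, hbC⟩ := hex
      have hFne : (Fc Γ v).Nonempty := ⟨b, (mem_Fc Γ).2 ⟨hbB, hbC⟩⟩
      have hb0F := pick_mem hFne
      obtain ⟨hb0B, hb0C⟩ := (mem_Fc Γ).1 hb0F
      have hnend0 : ¬ isEnd Γ (pick (Fc Γ v)) := by
        rintro ⟨u, huC, hdu⟩
        exact hnend u (comp0_eq Γ hb0C ▸ huC) hdu
      refine ⟨pick (Fc Γ v), hb0B, hb0C, ?_, ?_⟩
      · show wstar Γ (pick (Fc Γ v)) = _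
        rw [wstar_notend Γ hb0B hnend0, Fc_eq Γ hb0C, if_pos rfl]
        rfl
      · intro c hcC hcB hcne
        have hnendc : ¬ isEnd Γ c := by
          rintro ⟨u, huC, hdu⟩
          exact hnend u (comp0_eq Γ hcC ▸ huC) hdu
        show wstar Γ c = 0
        rw [wstar_notend Γ hcB hnendc, Fc_eq Γ hcC, if_neg hcne]
end

section
/- Let Gamma be a weighted tree containing a path u, z_1, ..., z_m, v where m is odd and each z_i has degree 2 in Gamma and weight 0. Then for every integer s, Gamma is birationally equivalent to the weighted tree with the same underlying tree and the same weights, except that the weight of u is increased by s and the weight of v is decreased by s. -/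
namespace WGraph

/-- `G` is a tree: a connected graph whose number of edges is one less than its
number of vertices (the sum of all degrees counts each edge twice). -/
def IsTree (G : WGraph) : Prop :=
  G.Connected ∧ ∑ v ∈ G.verts, G.deg v = 2 * (G.verts.card - 1)

end WGraph

namespace WGraph

lemma ext' {G G' : WGraph} (h1 : G.verts = G'.verts) (h2 : G.adj = G'.adj)
    (h3 : G.wt = G'.wt) : G = G' := by
  cases G; cases G'; simp_all

/-- shift weight: `a` gains 1, `b` loses 1. -/
def shiftWt (G : WGraph) (a b : ℕ) : WGraph :=
  { G with wt := fun c => if c = a then G.wt c + 1 else if c = b then G.wt c - 1 else G.wt c }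

@[simp] lemma shiftWt_verts (G : WGraph) (a b : ℕ) : (G.shiftWt a b).verts = G.verts := rfl
@[simp] lemma shiftWt_adj (G : WGraph) (a b : ℕ) : (G.shiftWt a b).adj = G.adj := rfl
@[simp] lemma shiftWt_deg (G : WGraph) (a b v : ℕ) : (G.shiftWt a b).deg v = G.deg v := rfl
lemma shiftWt_wt (G : WGraph) (a b c : ℕ) :
    (G.shiftWt a b).wt c = if c = a then G.wt c + 1 else if c = b then G.wt c - 1 else G.wt c := rfl

/-- result of inner blowup at edge `z b` with new vertex `x`. -/
def ibG (Γ : WGraph) (z b x : ℕ) (hz : z ∈ Γ.verts) (hb : b ∈ Γ.verts) : WGraph where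
  verts := insert x Γ.verts
  adj c d := decide (((Γ.adj c d = true ∧ ¬(c = z ∧ d = b) ∧ ¬(c = b ∧ d = z)) ∨
      (c = x ∧ (d = z ∨ d = b)) ∨ (d = x ∧ (c = z ∨ c = b))) ∧ c ≠ d)
  symm c d h := by
    simp only [decide_eq_true_eq] at *
    obtain ⟨h, hne⟩ := h
    have hs := Γ.symm c d
    exact ⟨by tauto, hne.symm⟩
  loopless c := by simp
  support c d h := by
    simp only [decide_eq_true_eq] at h
    obtain ⟨h, -⟩ := h
    simp only [Finset.mem_insert]
    rcases h with ⟨h, -⟩ | ⟨rfl, h⟩ | ⟨rfl, h⟩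
    · have := Γ.support c d h; tauto
    · rcases h with rfl | rfl <;> tauto
    · rcases h with rfl | rfl <;> tauto
  wt c := if c = x then -1 else if c = z then Γ.wt c - 1 else if c = b then Γ.wt c - 1 else Γ.wt c

lemma ibG_adj {Γ : WGraph} {z b x : ℕ} (hz : z ∈ Γ.verts) (hb : b ∈ Γ.verts) (c d : ℕ) :
    (ibG Γ z b x hz hb).adj c d = true ↔
    (((Γ.adj c d = true ∧ ¬(c = z ∧ d = b) ∧ ¬(c = b ∧ d = z)) ∨
      (c = x ∧ (d = z ∨ d = b)) ∨ (d = x ∧ (c = z ∨ c = b))) ∧ c ≠ d) := by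
  show decide _ = true ↔ _
  exact decide_eq_true_iff

lemma ibG_verts {Γ : WGraph} {z b x : ℕ} (hz : z ∈ Γ.verts) (hb : b ∈ Γ.verts) :
    (ibG Γ z b x hz hb).verts = insert x Γ.verts := rfl

lemma ibG_wt {Γ : WGraph} {z b x : ℕ} (hz : z ∈ Γ.verts) (hb : b ∈ Γ.verts) (c : ℕ) :
    (ibG Γ z b x hz hb).wt c = if c = x then -1 else if c = z then Γ.wt c - 1
      else if c = b then Γ.wt c - 1 else Γ.wt c := rfl

/-- result of the subsequent blowdown of `z` (whose neighbours were `a` and `b`). -/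
def bdG (Γ : WGraph) (a z b x : ℕ) (ha : a ∈ Γ.verts) (hb : b ∈ Γ.verts)
    (haz : a ≠ z) (hbz : b ≠ z) : WGraph where
  verts := insert x (Γ.verts.erase z)
  adj c d := decide (((Γ.adj c d = true ∧ c ≠ z ∧ d ≠ z) ∨
      (c = x ∧ (d = a ∨ d = b)) ∨ (d = x ∧ (c = a ∨ c = b))) ∧ c ≠ d)
  symm c d h := by
    simp only [decide_eq_true_eq] at *
    obtain ⟨h, hne⟩ := h
    have hs := Γ.symm c d
    exact ⟨by tauto, hne.symm⟩
  loopless c := by simp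
  support c d h := by
    simp only [decide_eq_true_eq] at h
    obtain ⟨h, -⟩ := h
    simp only [Finset.mem_insert, Finset.mem_erase]
    rcases h with ⟨h, hc, hd⟩ | ⟨rfl, h⟩ | ⟨rfl, h⟩
    · have := Γ.support c d h; tauto
    · rcases h with rfl | rfl <;> tauto
    · rcases h with rfl | rfl <;> tauto
  wt c := if c = x then 0 else if c = a then Γ.wt c + 1 else if c = b then Γ.wt c - 1 else Γ.wt c

lemma bdG_adj {Γ : WGraph} {a z b x : ℕ} (ha : a ∈ Γ.verts) (hb : b ∈ Γ.verts)
    (haz : a ≠ z) (hbz : b ≠ z) (c d : ℕ) :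
    (bdG Γ a z b x ha hb haz hbz).adj c d = true ↔
    (((Γ.adj c d = true ∧ c ≠ z ∧ d ≠ z) ∨
      (c = x ∧ (d = a ∨ d = b)) ∨ (d = x ∧ (c = a ∨ c = b))) ∧ c ≠ d) := by
  show decide _ = true ↔ _
  exact decide_eq_true_iff

lemma bdG_verts {Γ : WGraph} {a z b x : ℕ} (ha : a ∈ Γ.verts) (hb : b ∈ Γ.verts)
    (haz : a ≠ z) (hbz : b ≠ z) :
    (bdG Γ a z b x ha hb haz hbz).verts = insert x (Γ.verts.erase z) := rfl

lemma bdG_wt {Γ : WGraph} {a z b x : ℕ} (ha : a ∈ Γ.verts) (hb : b ∈ Γ.verts)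
    (haz : a ≠ z) (hbz : b ≠ z) (c : ℕ) :
    (bdG Γ a z b x ha hb haz hbz).wt c = if c = x then 0 else if c = a then Γ.wt c + 1
      else if c = b then Γ.wt c - 1 else Γ.wt c := rfl

/-- the key one-step lemma: if `z` has weight `0` and exactly the two neighbours
`a` and `b`, then we can shift one unit of weight from `b` to `a`. -/
theorem unit_shift {Γ : WGraph} {a z b : ℕ}
    (haz : Γ.adj a z = true) (hzb : Γ.adj z b = true)
    (hab : a ≠ b) (hdeg : Γ.deg z = 2) (hwz : Γ.wt z = 0) :
    BirEq Γ (Γ.shiftWt a b) := by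
  obtain ⟨ha, hzv⟩ := Γ.support a z haz
  obtain ⟨-, hb⟩ := Γ.support z b hzb
  have hza : Γ.adj z a = true := Γ.symm a z haz
  have hbz : Γ.adj b z = true := Γ.symm z b hzb
  have hanz : a ≠ z := by
    rintro rfl; have := Γ.loopless a
    rw [this] at haz; exact Bool.false_ne_true haz
  have hbnz : b ≠ z := by
    rintro rfl; have := Γ.loopless b
    rw [this] at hzb; exact Bool.false_ne_true hzb
  -- neighbours of z are exactly a and b
  have hnbr : ∀ c, Γ.adj z c = true ↔ (c = a ∨ c = b) := by
    have hsub : ({a, b} : Finset ℕ) ⊆ Γ.verts.filter (fun c => Γ.adj z c = true) := by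
      intro c hc
      simp only [Finset.mem_insert, Finset.mem_singleton] at hc
      rcases hc with rfl | rfl <;> simp [Finset.mem_filter, ha, hb, hza, hzb]
    have hcard : (Γ.verts.filter (fun c => Γ.adj z c = true)).card ≤ ({a, b} : Finset ℕ).card := by
      rw [Finset.card_pair hab]; exact le_of_eq hdeg
    have heq := Finset.eq_of_subset_of_card_le hsub hcard
    intro c
    constructor
    · intro hc
      have hcv : c ∈ Γ.verts := (Γ.support z c hc).2
      have : c ∈ ({a, b} : Finset ℕ) := heq ▸ (Finset.mem_filter.mpr ⟨hcv, hc⟩)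
      simpa using this
    · rintro (rfl | rfl) <;> assumption
  have hnbr' : ∀ c, Γ.adj c z = true ↔ (c = a ∨ c = b) := by
    intro c
    constructor
    · intro h; exact (hnbr c).1 (Γ.symm c z h)
    · intro h; exact Γ.symm z c ((hnbr c).2 h)
  obtain ⟨x, hx⟩ : ∃ x, x ∉ Γ.verts := Infinite.exists_notMem_finset Γ.verts
  have hxz : x ≠ z := fun h => hx (h ▸ hzv)
  have hxa : x ≠ a := fun h => hx (h ▸ ha)
  have hxb : x ≠ b := fun h => hx (h ▸ hb)
  have hadjx : ∀ c, Γ.adj x c = false := fun c => by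
    cases h : Γ.adj x c
    · rfl
    · exact absurd (Γ.support x c h).1 hx
  have hadjx' : ∀ c, Γ.adj c x = false := fun c => by
    cases h : Γ.adj c x
    · rfl
    · exact absurd (Γ.support c x h).2 hx
  have hloop := Γ.loopless
  set G1 := ibG Γ z b x hzv hb with hG1
  set G2 := bdG Γ a z b x ha hb hanz hbnz with hG2
  have L1 : IsInnerBlowup Γ G1 z b x := by
    refine ⟨hzb, hx, rfl, ?_, fun c => rfl⟩
    intro c d
    rw [hG1, ibG_adj]
    constructor
    · rintro ⟨h, -⟩; exact h
    · intro h
      refine ⟨h, ?_⟩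
      intro hcd
      subst hcd
      rcases h with ⟨h, -⟩ | ⟨h1, h2⟩ | ⟨h1, h2⟩ <;> simp_all
  have L2 : IsInnerBlowup G2 G1 a x z := by
    refine ⟨?_, ?_, ?_, ?_, ?_⟩
    · rw [hG2]
      exact decide_eq_true ⟨Or.inr (Or.inr ⟨rfl, Or.inl rfl⟩), fun h => hxa h.symm⟩
    · rw [hG2, bdG_verts]
      simp only [Finset.mem_insert, Finset.mem_erase]
      push_neg
      exact ⟨Ne.symm hxz, fun h => absurd rfl h⟩
    · rw [hG1, hG2, ibG_verts, bdG_verts]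
      ext c
      simp only [Finset.mem_insert, Finset.mem_erase]
      by_cases hcz : c = z <;> by_cases hcx : c = x <;> simp [hcz, hcx, hzv] <;> tauto
    · intro c d
      rw [hG1, hG2, ibG_adj, bdG_adj]
      by_cases hcz : c = z <;> by_cases hdz : d = z <;>
        by_cases hcx : c = x <;> by_cases hdx : d = x <;>
        simp_all <;> first | omega | tauto
    · intro c
      rw [hG1, hG2, ibG_wt, bdG_wt]
      by_cases hcx : c = x <;> by_cases hcz : c = z <;>
        by_cases hca : c = a <;> by_cases hcb : c = b <;>
        (try simp_all) <;> (try ring) <;> omega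
  have L3 : WIso G2 (Γ.shiftWt a b) := by
    refine ⟨fun c => if c = x then z else c, ⟨?_, ?_, ?_⟩, ?_, ?_⟩
    · intro c hc
      simp only [hG2, bdG_verts, Finset.coe_insert, Set.mem_insert_iff, Finset.coe_erase,
        Set.mem_diff, Finset.mem_coe, Finset.mem_erase, Set.mem_singleton_iff] at hc
      simp only [shiftWt_verts, Finset.mem_coe]
      by_cases hcx : c = x
      · simp only [if_pos hcx]; exact hzv
      · simp only [if_neg hcx]; tauto
    · intro c hc d hd hfd
      simp only [hG2, bdG_verts, Finset.coe_insert, Set.mem_insert_iff, Finset.coe_erase,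
        Set.mem_diff, Finset.mem_coe, Finset.mem_erase, Set.mem_singleton_iff] at hc hd
      have hfd' : (if c = x then z else c) = (if d = x then z else d) := hfd
      by_cases hcx : c = x <;> by_cases hdx : d = x
      · rw [hcx, hdx]
      · rw [if_pos hcx, if_neg hdx] at hfd'
        exact absurd hfd'.symm (by tauto)
      · rw [if_neg hcx, if_pos hdx] at hfd'
        exact absurd hfd' (by tauto)
      · rwa [if_neg hcx, if_neg hdx] at hfd'
    · intro c hc
      simp only [shiftWt_verts, Finset.mem_coe] at hc
      by_cases hcz : c = z
      · exact ⟨x, by simp [hG2, bdG_verts], by simp [hcz]⟩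
      · have hcx : c ≠ x := fun h => hx (h ▸ hc)
        exact ⟨c, by simp [hG2, bdG_verts, hcx, hcz, hc], by simp [hcx]⟩
    · intro c hc d hd
      simp only [hG2, bdG_verts, Finset.mem_insert, Finset.mem_erase] at hc hd
      have key : ∀ p q : Bool, (p = true ↔ q = true) → p = q := by
        intro p q h; cases p <;> cases q <;> simp_all
      have hnecd : Γ.adj c d = true → ¬c = d := by
        intro h he
        rw [he, hloop d] at h
        exact Bool.false_ne_true h
      apply key
      rw [shiftWt_adj, hG2, bdG_adj]
      by_cases hcx : c = x <;> by_cases hdx : d = x <;>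
        simp_all <;> first | omega | tauto
    · intro c hc
      simp only [hG2, bdG_verts, Finset.mem_insert, Finset.mem_erase] at hc
      by_cases hcx : c = x
      · subst hcx
        simp [shiftWt_wt, hG2, bdG_wt, Ne.symm hanz, Ne.symm hbnz, hwz, hxz, hxa, hxb]
      · have hcz : c ≠ z := by tauto
        simp [shiftWt_wt, hG2, bdG_wt, hcx, hcz]
  exact Relation.EqvGen.trans _ _ _
    (Relation.EqvGen.trans _ _ _
      (Relation.EqvGen.rel _ _ (Or.inl (Or.inl (Or.inl ⟨z, b, x, L1⟩))))
      (Relation.EqvGen.rel _ _ (Or.inl (Or.inr (Or.inl ⟨a, x, z, L2⟩)))))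
    (Relation.EqvGen.rel _ _ (Or.inr L3))

/-- shifting along an odd chain of zeros, one unit. -/
theorem chain_shift : ∀ (zs : List ℕ) (Γ : WGraph) (u v : ℕ),
    Odd zs.length →
    (u :: (zs ++ [v])).Nodup →
    (u :: (zs ++ [v])).Chain' (fun a b => Γ.adj a b = true) →
    (∀ z ∈ zs, Γ.deg z = 2 ∧ Γ.wt z = 0) →
    BirEq Γ (Γ.shiftWt u v)
  | [], _, _, _, hodd, _, _, _ => by simp at hodd
  | [z], Γ, u, v, hodd, hnd, hch, hz => by
    simp only [List.Chain', List.cons_append, List.nil_append, List.isChain_cons_cons, List.isChain_singleton,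
      and_true] at hch
    have huv : u ≠ v := by simp at hnd; tauto
    exact unit_shift hch.1 hch.2 huv (hz z (by simp)).1 (hz z (by simp)).2
  | z1 :: z2 :: zs', Γ, u, v, hodd, hnd, hch, hz => by
    have hodd' : Odd zs'.length := by
      rw [Nat.odd_iff] at hodd ⊢
      simp only [List.length_cons] at hodd
      omega
    have hndt : (z2 :: (zs' ++ [v])).Nodup := by
      have h := hnd
      simp only [List.cons_append] at h
      exact (h.of_cons).of_cons
    have hcht : (z2 :: (zs' ++ [v])).Chain' (fun a b => Γ.adj a b = true) := by
      have h := hch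
      simp only [List.cons_append] at h
      exact (h.tail).tail
    have h1 : Γ.adj u z1 = true := by
      simp only [List.Chain', List.cons_append, List.isChain_cons_cons] at hch
      exact hch.1
    have h2 : Γ.adj z1 z2 = true := by
      simp only [List.Chain', List.cons_append, List.isChain_cons_cons] at hch
      exact hch.2.1
    have hnd' := hnd
    simp only [List.cons_append, List.nodup_cons, List.mem_cons, List.mem_append,
      List.mem_singleton, not_or] at hnd'
    have huz2 : u ≠ z2 := by tauto
    have huv : u ≠ v := by tauto
    have hz2v : z2 ≠ v := by tauto
    have step1 : BirEq Γ (Γ.shiftWt u z2) :=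
      unit_shift h1 h2 huz2 (hz z1 (by simp)).1 (hz z1 (by simp)).2
    have step2 : BirEq (Γ.shiftWt u z2) ((Γ.shiftWt u z2).shiftWt z2 v) := by
      refine chain_shift zs' (Γ.shiftWt u z2) z2 v hodd' hndt ?_ ?_
      · exact hcht
      · intro z hzm
        have hzu : z ≠ u := fun h => (by tauto : u ∉ zs') (h ▸ hzm)
        have hzz2 : z ≠ z2 := fun h => (by tauto : z2 ∉ zs') (h ▸ hzm)
        have hzdeg := (hz z (by simp [hzm])).1
        have hzwt := (hz z (by simp [hzm])).2
        refine ⟨by simpa using hzdeg, ?_⟩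
        rw [shiftWt_wt, if_neg hzu, if_neg hzz2]
        exact hzwt
    have heq : (Γ.shiftWt u z2).shiftWt z2 v = Γ.shiftWt u v := by
      refine ext' rfl rfl ?_
      funext c
      simp only [shiftWt_wt]
      split_ifs <;> omega
    exact Relation.EqvGen.trans _ _ _ step1 (heq ▸ step2)

/-- `Γ` with `t` moved from `v` to `u`. -/
def twGraph (Γ : WGraph) (u v : ℕ) (t : ℤ) : WGraph :=
  { Γ with wt := fun a => if a = u then Γ.wt a + t else if a = v then Γ.wt a - t else Γ.wt a }

@[simp] lemma twGraph_verts (Γ : WGraph) (u v : ℕ) (t : ℤ) :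
    (twGraph Γ u v t).verts = Γ.verts := rfl
@[simp] lemma twGraph_adj (Γ : WGraph) (u v : ℕ) (t : ℤ) :
    (twGraph Γ u v t).adj = Γ.adj := rfl
@[simp] lemma twGraph_deg (Γ : WGraph) (u v w : ℕ) (t : ℤ) :
    (twGraph Γ u v t).deg w = Γ.deg w := rfl
lemma twGraph_wt (Γ : WGraph) (u v : ℕ) (t : ℤ) (a : ℕ) :
    (twGraph Γ u v t).wt a =
      if a = u then Γ.wt a + t else if a = v then Γ.wt a - t else Γ.wt a := rfl

end WGraph

open WGraph in
/-- moving weight along an odd chain of zeros: let `Γ` be a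
weighted tree containing a path `u, z₁, …, z_m, v` where `m` is odd and each `zᵢ`
has degree `2` in `Γ` and weight `0`. Then for every integer `s`, `Γ` is birationally
equivalent to the weighted tree with the same underlying tree and the same weights,
except that the weight of `u` is increased by `s` and the weight of `v` is decreased
by `s`. -/
theorem birEq_move_weight_along_odd_zero_chain
    (Γ : WGraph) (hT : Γ.IsTree) (u v : ℕ) (zs : List ℕ)
    (hodd : Odd zs.length)
    (hnd : (u :: (zs ++ [v])).Nodup)
    (hch : (u :: (zs ++ [v])).Chain' (fun a b => Γ.adj a b = true))
    (hz : ∀ z ∈ zs, Γ.deg z = 2 ∧ Γ.wt z = 0)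
    (s : ℤ) (Γ' : WGraph)
    (hverts : Γ'.verts = Γ.verts)
    (hadj : ∀ a b, Γ'.adj a b = Γ.adj a b)
    (hwt : ∀ a, Γ'.wt a =
      if a = u then Γ.wt a + s else if a = v then Γ.wt a - s else Γ.wt a) :
    BirEq Γ Γ' := by
  have hnd0 := hnd
  simp only [List.nodup_cons, List.mem_append, List.mem_singleton, not_or] at hnd0
  have huv : u ≠ v := hnd0.1.2
  -- hypotheses for the graph with shifted weights
  have hzuv : ∀ z ∈ zs, z ≠ u ∧ z ≠ v := by
    intro z hzm
    constructor
    · exact fun h => hnd0.1.1 (h ▸ hzm)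
    · rintro rfl
      have := List.disjoint_of_nodup_append hnd0.2
      exact this hzm (by simp)
  have hstep : ∀ t : ℤ, BirEq (twGraph Γ u v t) (twGraph Γ u v (t + 1)) := by
    intro t
    have h := chain_shift zs (twGraph Γ u v t) u v hodd hnd
      (by simpa using hch)
      (by
        intro z hzm
        obtain ⟨hzu, hzv⟩ := hzuv z hzm
        refine ⟨by simpa using (hz z hzm).1, ?_⟩
        rw [twGraph_wt, if_neg hzu, if_neg hzv]
        exact (hz z hzm).2)
    have heq : (twGraph Γ u v t).shiftWt u v = twGraph Γ u v (t + 1) := by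
      refine ext' rfl rfl ?_
      funext c
      simp only [shiftWt_wt, twGraph_wt]
      split_ifs <;> omega
    exact heq ▸ h
  have hstep' : ∀ t : ℤ, BirEq (twGraph Γ u v t) (twGraph Γ u v (t - 1)) := by
    intro t
    have hndr : (v :: (zs.reverse ++ [u])).Nodup := by
      have : (v :: (zs.reverse ++ [u])) = (u :: (zs ++ [v])).reverse := by simp
      rw [this, List.nodup_reverse]
      exact hnd
    have hchr : (v :: (zs.reverse ++ [u])).Chain' (fun a b => Γ.adj a b = true) := by
      have h1 : (u :: (zs ++ [v])).Chain' (flip fun a b => Γ.adj a b = true) :=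
        hch.imp (fun a b h => Γ.symm a b h)
      have h2 := List.isChain_reverse.mpr h1
      simpa [List.Chain', flip] using h2
    have h := chain_shift zs.reverse (twGraph Γ u v t) v u (by simpa using hodd) hndr
      (by simpa using hchr)
      (by
        intro z hzm
        rw [List.mem_reverse] at hzm
        obtain ⟨hzu, hzv⟩ := hzuv z hzm
        refine ⟨by simpa using (hz z hzm).1, ?_⟩
        rw [twGraph_wt, if_neg hzu, if_neg hzv]
        exact (hz z hzm).2)
    have heq : (twGraph Γ u v t).shiftWt v u = twGraph Γ u v (t - 1) := by
      refine ext' rfl rfl ?_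
      funext c
      simp only [shiftWt_wt, twGraph_wt]
      split_ifs <;> first | omega | (exfalso; exact huv (by omega))
    exact heq ▸ h
  have key : ∀ t : ℤ, BirEq Γ (twGraph Γ u v t) := by
    have h0 : twGraph Γ u v 0 = Γ := by
      refine ext' rfl rfl ?_
      funext c
      simp only [twGraph_wt]
      split_ifs <;> omega
    intro t
    induction t using Int.induction_on with
    | zero => rw [h0]; exact Relation.EqvGen.refl _
    | succ i ih => exact Relation.EqvGen.trans _ _ _ ih (hstep i)
    | pred i ih => exact Relation.EqvGen.trans _ _ _ ih (hstep' (-i))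
  have hG' : Γ' = twGraph Γ u v s := by
    refine ext' hverts (funext fun a => funext fun b => hadj a b) ?_
    funext a
    rw [hwt, twGraph_wt]
  rw [hG']
  exact key s
end

section
/- Let Gamma be a weighted tree containing a path b_1, z_1, b_2, z_2, ..., z_{n-1}, b_n (with n >= 1), where each z_i has degree 2 in Gamma and weight 0, and b_i has weight w_i. Then Gamma is birationally equivalent to the weighted tree with the same underlying tree and the same weights, except that b_i has weight 0 for all i < n and b_n has weight w_1 + w_2 + ... + w_n. -/
/-- Interleave two lists, alternating and starting with the first list:
`interleave [b₁,…,bₙ] [z₁,…,z_{n-1}] = [b₁, z₁, b₂, z₂, …, z_{n-1}, bₙ]`. -/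
def interleave : List ℕ → List ℕ → List ℕ
  | [], ys => ys
  | x :: xs, ys => x :: interleave ys xs
  termination_by xs ys => xs.length + ys.length
-- AUX START
namespace WGraph

lemma birEq_trans {G1 G2 G3 : WGraph} (h1 : BirEq G1 G2) (h2 : BirEq G2 G3) : BirEq G1 G3 :=
  Relation.EqvGen.trans _ _ _ h1 h2

lemma adj_ne {G : WGraph} {u v : ℕ} (h : G.adj u v = true) : u ≠ v := by
  rintro rfl
  rw [G.loopless] at h
  exact Bool.noConfusion h

lemma birEq_of_eq (G G' : WGraph) (hv : G'.verts = G.verts)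
    (ha : ∀ a b, G'.adj a b = G.adj a b) (hw : ∀ a ∈ G.verts, G'.wt a = G.wt a) :
    BirEq G G' := by
  refine Relation.EqvGen.rel _ _ (Or.inr ⟨id, ?_, ?_, ?_⟩)
  · rw [hv]; exact Set.bijOn_id _
  · intro u _ v _; exact ha u v
  · intro v hv'; exact hw v hv'

lemma nbr_iff (G : WGraph) (b z b' : ℕ) (hzb : G.adj z b = true) (hzb' : G.adj z b' = true)
    (hdeg : G.deg z = 2) (hbb' : b ≠ b') : ∀ c, G.adj z c = true ↔ c = b ∨ c = b' := by
  have hsub : ({b, b'} : Finset ℕ) ⊆ G.verts.filter (fun u => G.adj z u = true) := by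
    intro c hc
    simp only [Finset.mem_insert, Finset.mem_singleton] at hc
    rcases hc with rfl | rfl
    · exact Finset.mem_filter.2 ⟨(G.support _ _ hzb).2, hzb⟩
    · exact Finset.mem_filter.2 ⟨(G.support _ _ hzb').2, hzb'⟩
  have hcard : (G.verts.filter (fun u => G.adj z u = true)).card ≤ ({b, b'} : Finset ℕ).card := by
    rw [Finset.card_insert_of_notMem (by simpa using hbb'), Finset.card_singleton]
    exact le_of_eq hdeg
  have heq := Finset.eq_of_subset_of_card_le hsub hcard
  intro c
  constructor
  · intro h
    have hx : c ∈ ({b, b'} : Finset ℕ) := heq ▸ Finset.mem_filter.2 ⟨(G.support _ _ h).2, h⟩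
    simpa using hx
  · rintro (rfl | rfl) <;> assumption

/-- The graph obtained by the inner blowup of `G` at the edge `b z`, new vertex `x`. -/
def stepG1 (G : WGraph) (b z x : ℕ) (hbv : b ∈ G.verts) (hzv : z ∈ G.verts)
    (hx : x ∉ G.verts) : WGraph where
  verts := insert x G.verts
  adj a c := decide ((G.adj a c = true ∧ ¬(a = b ∧ c = z) ∧ ¬(a = z ∧ c = b)) ∨
    (a = x ∧ (c = b ∨ c = z)) ∨ (c = x ∧ (a = b ∨ a = z)))
  symm u v h := by
    rw [decide_eq_true_iff] at h ⊢
    have := G.symm u v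
    tauto
  loopless v := by
    apply decide_eq_false
    rintro (⟨h, -, -⟩ | ⟨rfl, (rfl | rfl)⟩ | ⟨rfl, (rfl | rfl)⟩)
    · rw [G.loopless] at h; exact Bool.noConfusion h
    · exact hx hbv
    · exact hx hzv
    · exact hx hbv
    · exact hx hzv
  support u v h := by
    rw [decide_eq_true_iff] at h
    rcases h with ⟨h, -, -⟩ | ⟨rfl, (rfl | rfl)⟩ | ⟨rfl, (rfl | rfl)⟩
    · exact ⟨Finset.mem_insert_of_mem (G.support _ _ h).1,
        Finset.mem_insert_of_mem (G.support _ _ h).2⟩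
    · exact ⟨Finset.mem_insert_self _ _, Finset.mem_insert_of_mem hbv⟩
    · exact ⟨Finset.mem_insert_self _ _, Finset.mem_insert_of_mem hzv⟩
    · exact ⟨Finset.mem_insert_of_mem hbv, Finset.mem_insert_self _ _⟩
    · exact ⟨Finset.mem_insert_of_mem hzv, Finset.mem_insert_self _ _⟩
  wt a := if a = x then -1 else if a = b then G.wt a - 1 else if a = z then G.wt a - 1 else G.wt a

/-- The graph obtained from `stepG1` by blowing down `z`. -/
def stepG2 (G : WGraph) (b z b' x : ℕ) (hbv : b ∈ G.verts) (hb'v : b' ∈ G.verts)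
    (hbzne : b ≠ z) (hb'zne : b' ≠ z) (hx : x ∉ G.verts) : WGraph where
  verts := insert x (G.verts.erase z)
  adj a c := decide ((G.adj a c = true ∧ a ≠ z ∧ c ≠ z) ∨
    (a = x ∧ (c = b ∨ c = b')) ∨ (c = x ∧ (a = b ∨ a = b')))
  symm u v h := by
    rw [decide_eq_true_iff] at h ⊢
    have := G.symm u v
    tauto
  loopless v := by
    apply decide_eq_false
    rintro (⟨h, -, -⟩ | ⟨rfl, (rfl | rfl)⟩ | ⟨rfl, (rfl | rfl)⟩)
    · rw [G.loopless] at h; exact Bool.noConfusion h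
    · exact hx hbv
    · exact hx hb'v
    · exact hx hbv
    · exact hx hb'v
  support u v h := by
    rw [decide_eq_true_iff] at h
    rcases h with ⟨h, ha, hc⟩ | ⟨rfl, (rfl | rfl)⟩ | ⟨rfl, (rfl | rfl)⟩
    · exact ⟨Finset.mem_insert_of_mem (Finset.mem_erase.2 ⟨ha, (G.support _ _ h).1⟩),
        Finset.mem_insert_of_mem (Finset.mem_erase.2 ⟨hc, (G.support _ _ h).2⟩)⟩
    · exact ⟨Finset.mem_insert_self _ _,
        Finset.mem_insert_of_mem (Finset.mem_erase.2 ⟨hbzne, hbv⟩)⟩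
    · exact ⟨Finset.mem_insert_self _ _,
        Finset.mem_insert_of_mem (Finset.mem_erase.2 ⟨hb'zne, hb'v⟩)⟩
    · exact ⟨Finset.mem_insert_of_mem (Finset.mem_erase.2 ⟨hbzne, hbv⟩),
        Finset.mem_insert_self _ _⟩
    · exact ⟨Finset.mem_insert_of_mem (Finset.mem_erase.2 ⟨hb'zne, hb'v⟩),
        Finset.mem_insert_self _ _⟩
  wt a := if a = x then 0 else if a = b then G.wt b - 1 else if a = b' then G.wt b' + 1 else G.wt a


lemma step (G G' : WGraph) (b z b' : ℕ)
    (hbz : G.adj b z = true) (hzb' : G.adj z b' = true)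
    (hdeg : G.deg z = 2) (hwz : G.wt z = 0) (hbb' : b ≠ b')
    (hv : G'.verts = G.verts) (ha : ∀ a c, G'.adj a c = G.adj a c)
    (hw : ∀ a, G'.wt a = if a = b then G.wt b - 1 else if a = b' then G.wt b' + 1 else G.wt a) :
    BirEq G G' := by
  have hzb : G.adj z b = true := G.symm _ _ hbz
  have hb'z : G.adj b' z = true := G.symm _ _ hzb'
  have hbv : b ∈ G.verts := (G.support _ _ hbz).1
  have hzv : z ∈ G.verts := (G.support _ _ hbz).2
  have hb'v : b' ∈ G.verts := (G.support _ _ hzb').2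
  have hbzne : b ≠ z := adj_ne hbz
  have hzbne : z ≠ b := adj_ne hzb
  have hzb'ne : z ≠ b' := adj_ne hzb'
  have hb'zne : b' ≠ z := adj_ne hb'z
  have hnbr : ∀ c, G.adj z c = true ↔ c = b ∨ c = b' := nbr_iff G b z b' hzb hzb' hdeg hbb'
  have hnbr' : ∀ c, G.adj c z = true ↔ c = b ∨ c = b' := fun c =>
    ⟨fun h => (hnbr c).1 (G.symm _ _ h), fun h => G.symm _ _ ((hnbr c).2 h)⟩
  obtain ⟨x, hx⟩ : ∃ x, x ∉ G.verts := by
    refine ⟨G.verts.sup id + 1, fun h => ?_⟩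
    have h2 : id (G.verts.sup id + 1) ≤ G.verts.sup id := Finset.le_sup h
    simp only [id] at h2
    omega
  have hxb : x ≠ b := fun h => hx (h ▸ hbv)
  have hxz : x ≠ z := fun h => hx (h ▸ hzv)
  have hxb' : x ≠ b' := fun h => hx (h ▸ hb'v)
  have hadjxl : ∀ c, G.adj x c ≠ true := fun c h => hx (G.support _ _ h).1
  have hadjxr : ∀ c, G.adj c x ≠ true := fun c h => hx (G.support _ _ h).2
  set G1 : WGraph := stepG1 G b z x hbv hzv hx with hG1def
  set G2 : WGraph := stepG2 G b z b' x hbv hb'v hbzne hb'zne hx with hG2def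
  have hG1adj : ∀ a c, G1.adj a c = true ↔
      ((G.adj a c = true ∧ ¬(a = b ∧ c = z) ∧ ¬(a = z ∧ c = b)) ∨
       (a = x ∧ (c = b ∨ c = z)) ∨ (c = x ∧ (a = b ∨ a = z))) := fun a c => by
    show decide _ = true ↔ _
    exact decide_eq_true_iff
  have hG2adj : ∀ a c, G2.adj a c = true ↔
      ((G.adj a c = true ∧ a ≠ z ∧ c ≠ z) ∨
       (a = x ∧ (c = b ∨ c = b')) ∨ (c = x ∧ (a = b ∨ a = b'))) := fun a c => by
    show decide _ = true ↔ _
    exact decide_eq_true_iff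
  have hG1wt : ∀ a, G1.wt a = if a = x then -1 else if a = b then G.wt a - 1
      else if a = z then G.wt a - 1 else G.wt a := fun a => rfl
  have hG2wt : ∀ a, G2.wt a = if a = x then 0 else if a = b then G.wt b - 1
      else if a = b' then G.wt b' + 1 else G.wt a := fun a => rfl
  have hmem2 : ∀ w, w ∈ G2.verts ↔ w = x ∨ (w ≠ z ∧ w ∈ G.verts) := by
    intro w
    show w ∈ insert x (G.verts.erase z) ↔ _
    simp only [Finset.mem_insert, Finset.mem_erase]
  -- first move: blow up the edge b z
  have hib1 : IsInnerBlowup G G1 b z x := ⟨hbz, hx, rfl, hG1adj, fun a => rfl⟩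
  -- second move: blow down z (G1 is the inner blowup of G2 at the edge x b')
  have hib2 : IsInnerBlowup G2 G1 x b' z := by
    refine ⟨?_, ?_, ?_, ?_, ?_⟩
    · exact decide_eq_true (Or.inr (Or.inl ⟨rfl, Or.inr rfl⟩))
    · intro hzz
      rcases (hmem2 z).1 hzz with h | ⟨h, -⟩
      · exact hxz h.symm
      · exact h rfl
    · show insert x G.verts = insert z (insert x (G.verts.erase z))
      ext a
      simp only [Finset.mem_insert, Finset.mem_erase]
      constructor
      · rintro (rfl | h)
        · exact Or.inr (Or.inl rfl)
        · by_cases hazz : a = z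
          · exact Or.inl hazz
          · exact Or.inr (Or.inr ⟨hazz, h⟩)
      · rintro (rfl | rfl | ⟨-, h⟩)
        · exact Or.inr hzv
        · exact Or.inl rfl
        · exact Or.inr h
    · intro a c
      rw [hG1adj, hG2adj]
      constructor
      · rintro (⟨h, hn1, hn2⟩ | ⟨rfl, (rfl | rfl)⟩ | ⟨rfl, (rfl | rfl)⟩)
        · by_cases haz : a = z
          · subst haz
            rcases (hnbr c).1 h with rfl | rfl
            · exact absurd ⟨rfl, rfl⟩ hn2
            · exact Or.inr (Or.inl ⟨rfl, Or.inr rfl⟩)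
          · by_cases hcz : c = z
            · subst hcz
              rcases (hnbr' a).1 h with rfl | rfl
              · exact absurd ⟨rfl, rfl⟩ hn1
              · exact Or.inr (Or.inr ⟨rfl, Or.inr rfl⟩)
            · refine Or.inl ⟨Or.inl ⟨h, haz, hcz⟩, ?_, ?_⟩
              · rintro ⟨rfl, -⟩; exact hadjxl _ h
              · rintro ⟨-, rfl⟩; exact hadjxr _ h
        · refine Or.inl ⟨Or.inr (Or.inl ⟨rfl, Or.inl rfl⟩), ?_, ?_⟩
          · rintro ⟨-, rfl⟩; exact hbb' rfl
          · rintro ⟨rfl, -⟩; exact hxb' rfl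
        · exact Or.inr (Or.inr ⟨rfl, Or.inl rfl⟩)
        · refine Or.inl ⟨Or.inr (Or.inr ⟨rfl, Or.inl rfl⟩), ?_, ?_⟩
          · rintro ⟨rfl, -⟩; exact hxb rfl
          · rintro ⟨rfl, -⟩; exact hbb' rfl
        · exact Or.inr (Or.inl ⟨rfl, Or.inl rfl⟩)
      · rintro (⟨hp2, hn1, hn2⟩ | ⟨rfl, (rfl | rfl)⟩ | ⟨rfl, (rfl | rfl)⟩)
        · rcases hp2 with ⟨h, haz, hcz⟩ | ⟨rfl, (rfl | rfl)⟩ | ⟨rfl, (rfl | rfl)⟩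
          · exact Or.inl ⟨h, fun hh => hcz hh.2, fun hh => haz hh.1⟩
          · exact Or.inr (Or.inl ⟨rfl, Or.inl rfl⟩)
          · exact absurd ⟨rfl, rfl⟩ hn1
          · exact Or.inr (Or.inr ⟨rfl, Or.inl rfl⟩)
          · exact absurd ⟨rfl, rfl⟩ hn2
        · exact Or.inr (Or.inr ⟨rfl, Or.inr rfl⟩)
        · exact Or.inl ⟨hzb', fun hh => hzbne hh.1, fun hh => hbb' hh.2.symm⟩
        · exact Or.inr (Or.inl ⟨rfl, Or.inr rfl⟩)
        · exact Or.inl ⟨hb'z, fun hh => hbb' hh.1.symm, fun hh => hb'zne hh.1⟩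
    · intro a
      rw [hG1wt, hG2wt]
      by_cases h1 : a = z
      · rw [h1]
        simp [Ne.symm hxz, hzbne, hwz]
      · by_cases h2 : a = x
        · rw [h2]
          simp [hxz, hxb, hxb']
        · by_cases h3 : a = b
          · rw [h3]
            have hbx : b ≠ x := fun h => hxb h.symm
            simp [hbzne, hbx, hbb']
          · by_cases h4 : a = b'
            · rw [h4]
              have hb'x : b' ≠ x := fun h => hxb' h.symm
              have hb'b : b' ≠ b := Ne.symm hbb'
              simp [hb'zne, hb'x, hb'b]
            · simp [h1, h2, h3, h4]
  -- iso between G2 and G'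
  have hiso : WIso G2 G' := by
    refine ⟨fun a => if a = x then z else a, ?_, ?_, ?_⟩
    · rw [hv]
      refine ⟨?_, ?_, ?_⟩
      · intro a haa
        rw [Finset.mem_coe] at haa ⊢
        rw [hmem2] at haa
        show (if a = x then z else a) ∈ G.verts
        by_cases h : a = x
        · rw [if_pos h]; exact hzv
        · rw [if_neg h]
          rcases haa with h' | ⟨-, hav⟩
          · exact absurd h' h
          · exact hav
      · intro a haa a' haa' hfa
        rw [Finset.mem_coe, hmem2] at haa haa'
        change (if a = x then z else a) = (if a' = x then z else a') at hfa
        by_cases h : a = x <;> by_cases h' : a' = x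
        · rw [h, h']
        · rw [if_pos h, if_neg h'] at hfa
          rcases haa' with hh | ⟨hne, -⟩
          · exact absurd hh h'
          · exact absurd hfa.symm hne
        · rw [if_neg h, if_pos h'] at hfa
          rcases haa with hh | ⟨hne, -⟩
          · exact absurd hh h
          · exact absurd hfa hne
        · rwa [if_neg h, if_neg h'] at hfa
      · intro a haa
        rw [Finset.mem_coe] at haa
        by_cases hane : a = z
        · refine ⟨x, Finset.mem_coe.2 ((hmem2 x).2 (Or.inl rfl)), ?_⟩
          show (if x = x then z else x) = a
          rw [if_pos rfl, hane]
        · have hax : a ≠ x := fun h => hx (h ▸ haa)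
          refine ⟨a, Finset.mem_coe.2 ((hmem2 a).2 (Or.inr ⟨hane, haa⟩)), ?_⟩
          show (if a = x then z else a) = a
          rw [if_neg hax]
    · intro u hu v hv'
      rw [ha]
      change G.adj (if u = x then z else u) (if v = x then z else v) = G2.adj u v
      have key : ∀ p q : Bool, (p = true ↔ q = true) → p = q := by
        intro p q hpq
        cases p <;> cases q <;> simp_all
      apply key
      rw [hG2adj]
      by_cases hux : u = x <;> by_cases hvx : v = x
      · rw [hux, hvx, if_pos rfl, G.loopless]
        constructor
        · intro h; exact absurd h Bool.noConfusion
        · rintro (⟨h, -, -⟩ | ⟨-, (rfl | rfl)⟩ | ⟨-, (rfl | rfl)⟩)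
          · exact absurd h (hadjxl _)
          · exact absurd rfl hxb
          · exact absurd rfl hxb'
          · exact absurd rfl hxb
          · exact absurd rfl hxb'
      · obtain (h | ⟨hvz, hvv⟩) := (hmem2 v).1 hv'
        · exact absurd h hvx
        rw [hux, if_pos rfl, if_neg hvx, hnbr v]
        constructor
        · intro h
          exact Or.inr (Or.inl ⟨rfl, h⟩)
        · rintro (⟨h, -, -⟩ | ⟨-, h⟩ | ⟨hvx', -⟩)
          · exact absurd h (hadjxl _)
          · exact h
          · exact absurd hvx' hvx
      · obtain (h | ⟨huz, huv⟩) := (hmem2 u).1 hu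
        · exact absurd h hux
        rw [hvx, if_neg hux, if_pos rfl, hnbr' u]
        constructor
        · intro h
          exact Or.inr (Or.inr ⟨rfl, h⟩)
        · rintro (⟨h, -, -⟩ | ⟨hux', -⟩ | ⟨-, h⟩)
          · exact absurd h (hadjxr _)
          · exact absurd hux' hux
          · exact h
      · obtain (h | ⟨huz, huv⟩) := (hmem2 u).1 hu
        · exact absurd h hux
        obtain (h | ⟨hvz, hvv⟩) := (hmem2 v).1 hv'
        · exact absurd h hvx
        rw [if_neg hux, if_neg hvx]
        constructor
        · intro h; exact Or.inl ⟨h, huz, hvz⟩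
        · rintro (⟨h, -, -⟩ | ⟨hux', -⟩ | ⟨hvx', -⟩)
          · exact h
          · exact absurd hux' hux
          · exact absurd hvx' hvx
    · intro a haa
      change G'.wt (if a = x then z else a) = G2.wt a
      rw [hG2wt]
      by_cases h2 : a = x
      · rw [h2, if_pos rfl, if_pos rfl, hw, if_neg hzbne, if_neg hzb'ne, hwz]
      · rw [if_neg h2, if_neg h2, hw]
  exact birEq_trans (Relation.EqvGen.rel _ _ (Or.inl (Or.inl (Or.inl ⟨b, z, x, hib1⟩))))
    (birEq_trans (Relation.EqvGen.rel _ _ (Or.inl (Or.inr (Or.inl ⟨x, b', z, hib2⟩))))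
      (Relation.EqvGen.rel _ _ (Or.inr hiso)))

lemma transfer (G : WGraph) (b z b' : ℕ)
    (hbz : G.adj b z = true) (hzb' : G.adj z b' = true)
    (hdeg : G.deg z = 2) (hwz : G.wt z = 0) (hbb' : b ≠ b') (c : ℤ) :
    ∀ (G' : WGraph), G'.verts = G.verts → (∀ a d, G'.adj a d = G.adj a d) →
    (∀ a, G'.wt a = if a = b then G.wt b - c else if a = b' then G.wt b' + c else G.wt a) →
    BirEq G G' := by
  have hbzne : b ≠ z := adj_ne hbz
  have hzb'ne : z ≠ b' := adj_ne hzb'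
  induction c using Int.induction_on with
  | zero =>
    intro G' hv ha hw
    apply birEq_of_eq G G' hv ha
    intro a _
    rw [hw]
    by_cases h1 : a = b
    · rw [if_pos h1, h1]; ring
    · rw [if_neg h1]
      by_cases h2 : a = b'
      · rw [if_pos h2, h2]; ring
      · rw [if_neg h2]
  | succ i ih =>
    intro G' hv ha hw
    set Gm : WGraph := ⟨G.verts, G.adj, G.symm, G.loopless, G.support,
      fun a => if a = b then G.wt b - i else if a = b' then G.wt b' + i else G.wt a⟩ with hGm
    have h1 : BirEq G Gm := ih Gm rfl (fun _ _ => rfl) (fun a => rfl)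
    have hGmwt : ∀ a, Gm.wt a = if a = b then G.wt b - i
        else if a = b' then G.wt b' + i else G.wt a := fun a => rfl
    have h2 : BirEq Gm G' := by
      apply step Gm G' b z b' hbz hzb' hdeg ?_ hbb' hv ha ?_
      · rw [hGmwt, if_neg (Ne.symm hbzne), if_neg hzb'ne, hwz]
      · intro a
        rw [hw, hGmwt, hGmwt, hGmwt]
        by_cases h3 : a = b
        · rw [if_pos h3, if_pos h3, if_pos rfl]
          push_cast
          ring
        · rw [if_neg h3, if_neg h3]
          by_cases h4 : a = b'
          · rw [if_pos h4, if_pos h4, if_pos rfl, if_neg (Ne.symm hbb')]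
            push_cast
            ring
          · rw [if_neg h4, if_neg h4, if_neg h3, if_neg h4]
    exact birEq_trans h1 h2
  | pred i ih =>
    intro G' hv ha hw
    set Gm : WGraph := ⟨G.verts, G.adj, G.symm, G.loopless, G.support,
      fun a => if a = b then G.wt b - (-i) else if a = b' then G.wt b' + (-i) else G.wt a⟩ with hGm
    have h1 : BirEq G Gm := ih Gm rfl (fun _ _ => rfl) (fun a => rfl)
    have hGmwt : ∀ a, Gm.wt a = if a = b then G.wt b - (-i)
        else if a = b' then G.wt b' + (-i) else G.wt a := fun a => rfl
    have h2 : BirEq Gm G' := by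
      apply step Gm G' b' z b (G.symm _ _ hzb') (G.symm _ _ hbz) hdeg ?_ (Ne.symm hbb') hv ha ?_
      · rw [hGmwt, if_neg (Ne.symm hbzne), if_neg hzb'ne, hwz]
      · intro a
        rw [hw, hGmwt, hGmwt, hGmwt]
        by_cases h3 : a = b <;> by_cases h4 : a = b'
        · exact absurd (h3.symm.trans h4) hbb'
        · simp only [h3, if_pos rfl, if_neg hbb', if_neg (Ne.symm hbb')]
          push_cast
          ring
        · simp only [h4, if_pos rfl, if_neg hbb', if_neg (Ne.symm hbb')]
          push_cast
          ring
        · simp only [if_neg h3, if_neg h4]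
    exact birEq_trans h1 h2

end WGraph

lemma interleave_nil (ys : List ℕ) : interleave [] ys = ys := by
  rw [interleave]

lemma interleave_cons (x : ℕ) (xs ys : List ℕ) :
    interleave (x :: xs) ys = x :: interleave ys xs := by
  rw [interleave]

lemma interleave_perm : ∀ (xs ys : List ℕ), (interleave xs ys).Perm (xs ++ ys)
  | [], ys => by
    rw [interleave_nil]
    simp
  | x :: xs, ys => by
    rw [interleave_cons]
    exact ((interleave_perm ys xs).cons x).trans ((List.perm_append_comm).cons x)
  termination_by xs ys => xs.length + ys.length


open WGraph in
/-- collecting weights at the end of a chain of branching points: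
let `Γ` be a weighted tree containing a path `b₁, z₁, b₂, z₂, …, z_{n-1}, bₙ`
(`n ≥ 1`) where each `zᵢ` has degree `2` in `Γ` and weight `0`. Then `Γ` is
birationally equivalent to the weighted tree with the same underlying tree and the
same weights, except that `bᵢ` has weight `0` for all `i < n` and `bₙ` has weight
`w₁ + ⋯ + wₙ`, where `wᵢ` is the `Γ`-weight of `bᵢ`. -/
theorem birEq_collect_weights_at_last_vertex
    (Γ : WGraph) (hT : Γ.IsTree) (bs zs : List ℕ)
    (hn : 1 ≤ bs.length) (hlen : zs.length + 1 = bs.length)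
    (hnd : (interleave bs zs).Nodup)
    (hch : (interleave bs zs).Chain' (fun a b => Γ.adj a b = true))
    (hmem : ∀ x ∈ interleave bs zs, x ∈ Γ.verts)
    (hz : ∀ z ∈ zs, Γ.deg z = 2 ∧ Γ.wt z = 0)
    (blast : ℕ) (hblast : bs.getLast? = some blast)
    (Γ' : WGraph)
    (hverts : Γ'.verts = Γ.verts)
    (hadj : ∀ a b, Γ'.adj a b = Γ.adj a b)
    (hwt : ∀ a, Γ'.wt a =
      if a ∈ bs.dropLast then 0
      else if a = blast then (bs.map Γ.wt).sum
      else Γ.wt a) :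
    BirEq Γ Γ' := by
  induction zs generalizing Γ bs with
  | nil =>
    obtain ⟨b, rfl⟩ : ∃ b, bs = [b] := by
      match bs, hlen with
      | [b], _ => exact ⟨b, rfl⟩
    have hb : b = blast := by simpa using hblast
    apply birEq_of_eq Γ Γ' hverts hadj
    intro a _
    rw [hwt]
    simp only [List.dropLast_singleton, List.not_mem_nil, if_false, List.map_cons,
      List.map_nil, List.sum_cons, List.sum_nil, add_zero]
    by_cases h : a = blast
    · rw [if_pos h, h, ← hb]
    · rw [if_neg h]
  | cons z zs' ih =>
    obtain ⟨b, b2, rest, rfl⟩ : ∃ b b2 rest, bs = b :: b2 :: rest := by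
      match bs, hlen with
      | b :: b2 :: rest, _ => exact ⟨b, b2, rest, rfl⟩
    have hndapp : ((b :: b2 :: rest) ++ (z :: zs')).Nodup :=
      (interleave_perm _ _).nodup hnd
    have hbsnd : (b :: b2 :: rest).Nodup := hndapp.of_append_left
    have hdisj : List.Disjoint (b :: b2 :: rest) (z :: zs') :=
      List.disjoint_of_nodup_append hndapp
    have hbnotin : b ∉ b2 :: rest := (List.nodup_cons.1 hbsnd).1
    have hb2notin : b2 ∉ rest := (List.nodup_cons.1 (List.nodup_cons.1 hbsnd).2).1
    have hbb2 : b ≠ b2 := fun h => hbnotin (h ▸ List.mem_cons_self)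
    rw [interleave_cons, interleave_cons, interleave_cons] at hnd hch hmem
    rw [List.Chain', List.isChain_cons_cons, List.isChain_cons_cons] at hch
    have habz := hch.1
    have hazb2 := hch.2.1
    have hchain := hch.2.2
    have hzfact := hz z (List.mem_cons_self)
    -- the intermediate graph
    set Γ₁ : WGraph := ⟨Γ.verts, Γ.adj, Γ.symm, Γ.loopless, Γ.support,
      fun a => if a = b then Γ.wt b - Γ.wt b
        else if a = b2 then Γ.wt b2 + Γ.wt b else Γ.wt a⟩ with hΓ₁def
    have hΓ₁wt : ∀ a, Γ₁.wt a = if a = b then Γ.wt b - Γ.wt b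
        else if a = b2 then Γ.wt b2 + Γ.wt b else Γ.wt a := fun a => rfl
    have h1 : BirEq Γ Γ₁ :=
      transfer Γ b z b2 habz hazb2 hzfact.1 hzfact.2 hbb2 (Γ.wt b) Γ₁ rfl
        (fun _ _ => rfl) (fun a => rfl)
    -- facts for the inductive hypothesis
    have hblast' : (b2 :: rest).getLast? = some blast := by
      rwa [List.getLast?_cons_cons] at hblast
    have hbL : blast ∈ b2 :: rest := by
      have hh := List.dropLast_append_getLast? blast hblast'
      rw [← hh]
      exact List.mem_append_right _ (List.mem_cons_self)
    have h2 : BirEq Γ₁ Γ' := by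
      apply ih Γ₁ hT (b2 :: rest) (by simp) (by simp at hlen ⊢; omega)
        (by rw [interleave_cons]; exact (List.nodup_cons.1 (List.nodup_cons.1 hnd).2).2)
        (by rw [interleave_cons]; exact hchain)
        (by
          rw [interleave_cons]
          intro y hy
          exact hmem y (List.mem_cons_of_mem _ (List.mem_cons_of_mem _ hy)))
        ?_ ?_ hverts hadj ?_
      · -- weights and degrees of the subdividing vertices
        intro w hw
        have h0 := hz w (List.mem_cons_of_mem _ hw)
        refine ⟨h0.1, ?_⟩
        have hwb : w ≠ b := by
          intro h
          exact hdisj (List.mem_cons_self)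
            (by rw [← h]; exact List.mem_cons_of_mem _ hw)
        have hwb2 : w ≠ b2 := by
          intro h
          exact hdisj (List.mem_cons_of_mem _ (List.mem_cons_self))
            (by rw [← h]; exact List.mem_cons_of_mem _ hw)
        rw [hΓ₁wt, if_neg hwb, if_neg hwb2]
        exact h0.2
      · exact hblast'
      · -- the weight identity
        intro a
        rw [hwt a]
        have hdrop : (b :: b2 :: rest).dropLast = b :: (b2 :: rest).dropLast := rfl
        rw [hdrop]
        by_cases hab : a = b
        · rw [if_pos (by rw [hab]; exact List.mem_cons_self)]
          have hnd1 : a ∉ (b2 :: rest).dropLast := by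
            rw [hab]
            intro hmm
            exact hbnotin ((List.dropLast_sublist _).subset hmm)
          have hnd2 : a ≠ blast := by
            rw [hab]
            intro h
            exact hbnotin (h ▸ hbL)
          rw [if_neg hnd1, if_neg hnd2, hΓ₁wt, if_pos hab]
          ring
        · by_cases hmem1 : a ∈ (b2 :: rest).dropLast
          · rw [if_pos (List.mem_cons_of_mem _ hmem1), if_pos hmem1]
          · rw [if_neg (by
              intro hmm
              rcases List.mem_cons.1 hmm with h | h
              · exact hab h
              · exact hmem1 h), if_neg hmem1]
            by_cases hab2 : a = blast
            · rw [if_pos hab2, if_pos hab2]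
              have hmapeq : rest.map Γ₁.wt = rest.map Γ.wt := by
                apply List.map_congr_left
                intro y hy
                have hyb : y ≠ b := fun h =>
                  hbnotin (by rw [← h]; exact List.mem_cons_of_mem _ hy)
                have hyb2 : y ≠ b2 := fun h => hb2notin (h ▸ hy)
                rw [hΓ₁wt, if_neg hyb, if_neg hyb2]
              simp only [List.map_cons, List.sum_cons, hmapeq, hΓ₁wt,
                if_neg (Ne.symm hbb2), if_pos rfl, if_true]
              ring
            · rw [if_neg hab2, if_neg hab2]
              have hab2' : a ≠ b2 := by
                intro h
                cases rest with
                | nil =>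
                  apply hab2
                  rw [h]
                  simpa using hblast'
                | cons r rs =>
                  apply hmem1
                  rw [h]
                  exact List.mem_cons_self
              rw [hΓ₁wt, if_neg hab, if_neg hab2']
    exact WGraph.birEq_trans h1 h2
end

section
/- For every finite list of integers q and all integers a, b, the list (0, a) ++ q is linearly birationally equivalent to the list (0, b) ++ q. -/
/-- A single move on a linear weighted graph, viewed as the list of its integer
weights listed consecutively: an inner blowup at an edge between consecutive
entries `a, b` (replacing `(a, b)` by `(a-1, -1, b-1)`), an outer blowup at the
left end (replacing the end entry `a` by `(-1, a-1)`), or a reversal of the chain.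
Blowdowns are the inverses of these moves. -/
inductive LinMove : List ℤ → List ℤ → Prop
  | inner (p q : List ℤ) (a b : ℤ) :
      LinMove (p ++ a :: b :: q) (p ++ (a - 1) :: (-1) :: (b - 1) :: q)
  | outer (a : ℤ) (q : List ℤ) :
      LinMove (a :: q) ((-1) :: (a - 1) :: q)
  | rev (l : List ℤ) : LinMove l l.reverse

/-- Linear birational equivalence of chains of weights: the equivalence relation
generated by blowups, blowdowns (all intermediate graphs being chains) and
reversals. -/
def LinBirEq : List ℤ → List ℤ → Prop := Relation.EqvGen LinMove

lemma linBirEq_step (q : List ℤ) (a : ℤ) :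
    LinBirEq (0 :: a :: q) (0 :: (a - 1) :: q) := by
  have h1 : LinMove (0 :: a :: q) ((-1) :: (-1) :: (a - 1) :: q) := by
    have := LinMove.inner [] q 0 a
    norm_num at this
    exact this
  have h2 : LinMove (0 :: (a - 1) :: q) ((-1) :: (-1) :: (a - 1) :: q) := by
    have := LinMove.outer 0 ((a - 1) :: q)
    norm_num at this
    exact this
  exact Relation.EqvGen.trans _ _ _ (Relation.EqvGen.rel _ _ h1)
    (Relation.EqvGen.symm _ _ (Relation.EqvGen.rel _ _ h2))

lemma linBirEq_to_zero (q : List ℤ) (a : ℤ) :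
    LinBirEq (0 :: a :: q) (0 :: (0 : ℤ) :: q) := by
  induction a using Int.induction_on with
  | zero => exact Relation.EqvGen.refl _
  | succ n ih =>
      refine Relation.EqvGen.trans _ _ _ ?_ ih
      have := linBirEq_step q ((n : ℤ) + 1)
      simpa [LinBirEq] using this
  | pred n ih =>
      refine Relation.EqvGen.trans _ _ _ ?_ ih
      have := Relation.EqvGen.symm _ _ (linBirEq_step q (-(n : ℤ)))
      simpa using this

/-- elementary transformation at an end zero: for every finite
list of integers `q` and all integers `a, b`, the chain `(0, a) ++ q` is linearly
birationally equivalent to the chain `(0, b) ++ q`. -/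
theorem linBirEq_zero_head_arbitrary (q : List ℤ) (a b : ℤ) :
    LinBirEq (0 :: a :: q) (0 :: b :: q) := by
  exact Relation.EqvGen.trans _ _ _ (linBirEq_to_zero q a)
    (Relation.EqvGen.symm _ _ (linBirEq_to_zero q b))
end

section
/- For every n >= 1 and all integers w_1, ..., w_n, the list (w_1, 0, w_2, 0, ..., 0, w_n) of length 2n-1 (the weights w_i alternating with single zeros) is linearly birationally equivalent to the list of the same length 2n-1 whose entries are all 0 except the last, which equals w_1 + w_2 + ... + w_n. -/
/-- The alternating list `(w 0, 0, w 1, 0, …, 0, w (n-1))` of length `2n - 1`: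
the weights `w i` alternating with single zeros. -/
def altList : (n : ℕ) → (ℕ → ℤ) → List ℤ
  | 0, _ => []
  | 1, w => [w 0]
  | n + 2, w => w 0 :: 0 :: altList (n + 1) (fun i => w (i + 1))

open Relation

lemma slide (p q : List ℤ) (a b : ℤ) :
    LinBirEq (p ++ a :: 0 :: b :: q) (p ++ (a - 1) :: 0 :: (b + 1) :: q) := by
  refine EqvGen.trans _ (p ++ (a - 1) :: (-1) :: (-1) :: b :: q) _ ?_ ?_
  · apply EqvGen.rel
    have h := LinMove.inner p (b :: q) a 0
    simpa using h
  · apply EqvGen.symm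
    apply EqvGen.rel
    have h := LinMove.inner (p ++ [a - 1]) q 0 (b + 1)
    simpa using h

lemma slide_to_zero (p q : List ℤ) (a b : ℤ) :
    LinBirEq (p ++ a :: 0 :: b :: q) (p ++ 0 :: 0 :: (a + b) :: q) := by
  induction a using Int.induction_on generalizing b with
  | zero => simpa [LinBirEq] using EqvGen.refl (p ++ (0:ℤ) :: 0 :: b :: q)
  | succ k ih =>
      refine EqvGen.trans _ (p ++ (k : ℤ) :: 0 :: (b + 1) :: q) _ ?_ ?_
      · simpa [LinBirEq] using slide p q (k + 1) b
      · have h := ih (b + 1)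
        have : ((k : ℤ) + (b + 1)) = (k + 1 + b) := by ring
        rwa [this] at h
  | pred k ih =>
      refine EqvGen.trans _ (p ++ (-(k : ℤ)) :: 0 :: (b - 1) :: q) _ ?_ ?_
      · apply EqvGen.symm
        have h := slide p q (-(k : ℤ)) (b - 1)
        have h2 : (b - 1 + 1 : ℤ) = b := by ring
        rwa [h2] at h
      · have h := ih (b - 1)
        have : (-(k : ℤ) + (b - 1)) = (-(k : ℤ) - 1 + b) := by ring
        rwa [this] at h

lemma altList_succ_eq (n : ℕ) (w : ℕ → ℤ) :
    ∃ t, altList (n + 1) w = w 0 :: t := by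
  cases n with
  | zero => exact ⟨[], rfl⟩
  | succ m => exact ⟨0 :: altList (m + 1) (fun i => w (i + 1)), rfl⟩

lemma main_lemma (n : ℕ) : ∀ (w : ℕ → ℤ) (p : List ℤ),
    LinBirEq (p ++ altList (n + 1) w)
      (p ++ List.replicate (2 * n) 0 ++ [∑ i ∈ Finset.range (n + 1), w i]) := by
  induction n with
  | zero =>
      intro w p
      simpa [altList, LinBirEq] using EqvGen.refl (r := LinMove) (p ++ [w 0])
  | succ m ih =>
      intro w p
      obtain ⟨t, ht⟩ := altList_succ_eq m (fun i => w (i + 1))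
      have h1 : altList (m + 2) w = w 0 :: 0 :: w 1 :: t := by
        simp [altList, ht]
      set w'' : ℕ → ℤ := fun i => if i = 0 then w 0 + w 1 else w (i + 1) with hw''
      have h2 : altList (m + 1) w'' = (w 0 + w 1) :: t := by
        cases m with
        | zero =>
            have : t = [] := by simpa [altList] using ht.symm
            simp [this, altList, hw'']
        | succ k =>
            have htail : (fun i => w'' (i + 1)) = (fun i => w (i + 2)) := by
              funext i; simp [hw'']
            have ht' : t = 0 :: altList (k + 1) (fun i => w (i + 2)) := by
              simpa [altList] using ht.symm
            simp [altList, hw'', htail, ht']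
      refine EqvGen.trans _ (p ++ 0 :: 0 :: (w 0 + w 1) :: t) _ ?_ ?_
      · rw [h1]; exact slide_to_zero p t (w 0) (w 1)
      · have hre : p ++ 0 :: 0 :: (w 0 + w 1) :: t = (p ++ [0, 0]) ++ altList (m + 1) w'' := by
          simp [h2]
        have hsum : (∑ i ∈ Finset.range (m + 1), w'' i) = ∑ i ∈ Finset.range (m + 2), w i := by
          rw [Finset.sum_range_succ', Finset.sum_range_succ', Finset.sum_range_succ']
          simp [hw'']
          ring
        have hrep : (p ++ [0, 0]) ++ List.replicate (2 * m) 0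
            = p ++ List.replicate (2 * (m + 1)) 0 := by
          have : 2 * (m + 1) = 2 + 2 * m := by ring
          rw [this, List.replicate_add]
          simp [List.replicate]
        rw [hre, ← hsum, ← hrep]
        exact ih w'' (p ++ [0, 0])

/-- for every `n ≥ 1` and all integers `w₁, …, wₙ`, the chain
`(w₁, 0, w₂, 0, …, 0, wₙ)` of length `2n - 1` is linearly birationally equivalent
to the chain of the same length `2n - 1` whose entries are all `0` except the last,
which equals `w₁ + w₂ + ⋯ + wₙ`. -/
theorem linBirEq_alternating_zeros_collect_sum (n : ℕ) (hn : 1 ≤ n) (w : ℕ → ℤ) :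
    LinBirEq (altList n w)
      (List.replicate (2 * n - 2) 0 ++ [∑ i ∈ Finset.range n, w i]) := by
  obtain ⟨m, rfl⟩ := Nat.exists_eq_add_of_le hn
  have h := main_lemma m w []
  have : 2 * (1 + m) - 2 = 2 * m := by omega
  rw [this]
  simpa [Nat.add_comm] using h
end

section
/- For every k >= 0, every n >= 0, and all integers w_1, ..., w_n <= -2, the list (0,...,0 (2k zeros), w_1, ..., w_n) is linearly birationally equivalent to the list (0,...,0 (2k zeros), w_n, ..., w_1); that is, the reversion of a standard linear weighted graph is realized by a birational transformation. -/
namespace LinBirEqAux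

lemma rel {l l' : List ℤ} (h : LinMove l l') : LinBirEq l l' := Relation.EqvGen.rel _ _ h

lemma refl (l : List ℤ) : LinBirEq l l := Relation.EqvGen.refl l

lemma symm {l l' : List ℤ} (h : LinBirEq l l') : LinBirEq l' l := Relation.EqvGen.symm _ _ h

lemma trans {l₁ l₂ l₃ : List ℤ} (h : LinBirEq l₁ l₂) (h' : LinBirEq l₂ l₃) :
    LinBirEq l₁ l₃ := Relation.EqvGen.trans _ _ _ h h'

/-- Elementary transformation at an inner `0`-vertex: one step. -/
lemma elem_one (p q : List ℤ) (a b : ℤ) :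
    LinBirEq (p ++ a :: 0 :: b :: q) (p ++ (a + 1) :: 0 :: (b - 1) :: q) := by
  have h1 : LinMove (p ++ a :: 0 :: b :: q)
      (p ++ a :: (-1) :: (-1) :: (b - 1) :: q) := by
    have := LinMove.inner (p ++ [a]) q 0 b
    simpa using this
  have h2 : LinMove (p ++ (a + 1) :: 0 :: (b - 1) :: q)
      (p ++ a :: (-1) :: (-1) :: (b - 1) :: q) := by
    have := LinMove.inner p ((b - 1) :: q) (a + 1) 0
    simpa using this
  exact trans (rel h1) (symm (rel h2))

/-- Elementary transformation, iterated `t` times for any integer `t`. -/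
lemma elem (t : ℤ) (p q : List ℤ) (a b : ℤ) :
    LinBirEq (p ++ a :: 0 :: b :: q) (p ++ (a + t) :: 0 :: (b - t) :: q) := by
  induction t using Int.induction_on with
  | zero => simpa using refl (p ++ a :: 0 :: b :: q)
  | succ t ih =>
      have e1 : a + ((t : ℤ) + 1) = a + t + 1 := by ring
      have e2 : b - ((t : ℤ) + 1) = b - t - 1 := by ring
      rw [e1, e2]
      exact trans ih (elem_one p q (a + t) (b - t))
  | pred t ih =>
      have h := elem_one p q (a + (-(t : ℤ) - 1)) (b - (-(t : ℤ) - 1))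
      have e1 : a + (-(t : ℤ) - 1) + 1 = a + -(t : ℤ) := by ring
      have e2 : b - (-(t : ℤ) - 1) - 1 = b - -(t : ℤ) := by ring
      rw [e1, e2] at h
      exact trans ih (symm h)

/-- Slide a pair of zeros past one entry. -/
lemma swap (p q : List ℤ) (c : ℤ) :
    LinBirEq (p ++ 0 :: 0 :: c :: q) (p ++ c :: 0 :: 0 :: q) := by
  have := elem c p q 0 c
  simpa using this

/-- Slide a pair of zeros past a whole list. -/
lemma slide (u : List ℤ) : ∀ p q : List ℤ,
    LinBirEq (p ++ 0 :: 0 :: (u ++ q)) (p ++ u ++ 0 :: 0 :: q) := by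
  induction u with
  | nil => intro p q; simpa using refl (p ++ 0 :: 0 :: q)
  | cons c u ih =>
      intro p q
      have h1 : LinBirEq (p ++ 0 :: 0 :: (c :: u ++ q))
          (p ++ c :: 0 :: 0 :: (u ++ q)) := swap p (u ++ q) c
      have h2 := ih (p ++ [c]) q
      have h2' : LinBirEq (p ++ c :: 0 :: 0 :: (u ++ q))
          (p ++ (c :: u) ++ 0 :: 0 :: q) := by simpa using h2
      exact trans h1 h2'

/-- A block of `2k` zeros commutes with any list. -/
lemma zeros_comm (k : ℕ) : ∀ u : List ℤ,
    LinBirEq (List.replicate (2 * k) 0 ++ u) (u ++ List.replicate (2 * k) 0) := by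
  induction k with
  | zero => intro u; simpa using refl u
  | succ k ih =>
      intro u
      have hrep : List.replicate (2 * (k + 1)) (0 : ℤ)
          = List.replicate (2 * k) 0 ++ [0, 0] := by
        have : 2 * (k + 1) = 2 * k + 2 := by ring
        rw [this, List.replicate_add]
        rfl
      have h1 : LinBirEq (List.replicate (2 * k) 0 ++ 0 :: 0 :: (u ++ []))
          (List.replicate (2 * k) 0 ++ u ++ 0 :: 0 :: ([] : List ℤ)) :=
        slide u (List.replicate (2 * k) 0) []
      have h2 := ih (u ++ [0, 0])
      have hA : LinBirEq (List.replicate (2 * (k + 1)) 0 ++ u)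
          (List.replicate (2 * k) 0 ++ u ++ [0, 0]) := by
        rw [hrep]; simpa using h1
      have hB : LinBirEq (List.replicate (2 * k) 0 ++ u ++ [0, 0])
          (u ++ List.replicate (2 * (k + 1)) 0) := by
        rw [hrep]
        have heq : List.replicate (2 * k) 0 ++ u ++ [0, 0]
            = List.replicate (2 * k) 0 ++ (u ++ [0, 0]) := by simp
        rw [heq]
        have hz : List.replicate (2 * k) (0 : ℤ) ++ [0, 0]
            = [0, 0] ++ List.replicate (2 * k) 0 := by
          rw [show ([0, 0] : List ℤ) = List.replicate 2 0 from rfl,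
            ← List.replicate_add, ← List.replicate_add, Nat.add_comm]
        rw [hz]
        simpa [List.append_assoc] using h2
      exact trans hA hB

end LinBirEqAux

/-- the reversion of a standard chain is birational: for every
`k ≥ 0`, every `n ≥ 0` and all integers `w₁, …, wₙ ≤ -2`, the chain
`(0,…,0 (2k zeros), w₁, …, wₙ)` is linearly birationally equivalent to the chain
`(0,…,0 (2k zeros), wₙ, …, w₁)`. -/
theorem standard_chain_linBirEq_reversion (k n : ℕ) (w : Fin n → ℤ)
    (hw : ∀ i, w i ≤ -2) :
    LinBirEq (List.replicate (2 * k) 0 ++ List.ofFn w)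
      (List.replicate (2 * k) 0 ++ (List.ofFn w).reverse) := by
  have h1 : LinBirEq (List.replicate (2 * k) 0 ++ List.ofFn w)
      ((List.ofFn w).reverse ++ List.replicate (2 * k) 0) := by
    have := LinMove.rev (List.replicate (2 * k) 0 ++ List.ofFn w)
    have h := LinBirEqAux.rel this
    simpa [List.reverse_append, List.reverse_replicate] using h
  have h2 := LinBirEqAux.zeros_comm k (List.ofFn w).reverse
  exact LinBirEqAux.trans h1 (LinBirEqAux.symm h2)
end
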